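/- arXiv:0905.1053 — 2 statements merged into one kernel-verified Lean document; each statement's English description precedes it below -/
import Mathlib

section
/- Let G_1 = (V_1, E_1) be an exactly k-edge-connected multigraph, let v ∈ V_1, and let G be obtained from G_1 by a k-bridge addition at v: add one new vertex u and k parallel edges between u and v. Then G is exactly k-edge-connected. -/
/-! Basic theory of loopless undirected multigraphs. -/

/-- A loopless undirected multigraph on the vertex type `V`: a type of edges
together with a map assigning to each edge its unordered pair of (distinct)
endpoints.  All multigraphs are assumed to have finitely many edges. -/
structure Multigraph (V : Type) where
  Edge : Type
  ends : Edge → Sym2 V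
  loopless : ∀ e, ¬ (ends e).IsDiag
  edge_finite : Finite Edge

namespace Multigraph

open scoped Classical

variable {V : Type}

instance (G : Multigraph V) : Finite G.Edge := G.edge_finite

lemma exists_pair_eq {α : Type} (z : Sym2 α) : ∃ x y, z = s(x, y) := by
  induction z using Sym2.ind with
  | _ x y => exact ⟨x, y, rfl⟩

lemma map_not_isDiag {α β : Type} (f : α → β) (z : Sym2 α)
    (hf : ∀ x ∈ z, ∀ y ∈ z, f x = f y → x = y) (hz : ¬ z.IsDiag) :
    ¬ (z.map f).IsDiag := by
  obtain ⟨x, y, rfl⟩ := exists_pair_eq z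
  rw [Sym2.map_pair_eq, Sym2.mk_isDiag_iff]
  rw [Sym2.mk_isDiag_iff] at hz
  exact fun h => hz (hf x (by simp) y (by simp) h)

/-- Restrict an unordered pair, all of whose members satisfy `P`, to an
unordered pair of elements of the subtype `{x // P x}`. -/
noncomputable def sym2RestrictP {α : Type} (P : α → Prop) (z : Sym2 α) (h : ∀ x ∈ z, P x) :
    Sym2 {x : α // P x} :=
  z.map fun x =>
    if hx : P x then ⟨x, hx⟩
    else Classical.choice (by
      obtain ⟨a, b, rfl⟩ := exists_pair_eq z
      exact ⟨⟨a, h a (by simp)⟩⟩)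

lemma sym2RestrictP_not_isDiag {α : Type} (P : α → Prop) (z : Sym2 α) (h : ∀ x ∈ z, P x)
    (hz : ¬ z.IsDiag) : ¬ (sym2RestrictP P z h).IsDiag := by
  apply map_not_isDiag
  · intro a ha b hb hab
    rw [dif_pos (h a ha), dif_pos (h b hb)] at hab
    exact congrArg Subtype.val hab
  · exact hz

/-- Walks in a multigraph, recorded as alternating sequences of vertices and edges. -/
inductive Walk (G : Multigraph V) : V → V → Type
  | nil (v : V) : Walk G v v
  | cons {u v w : V} (e : G.Edge) (he : G.ends e = s(u, v)) (p : Walk G v w) : Walk G u w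

namespace Walk

variable {G : Multigraph V}

/-- The list of edges used by a walk. -/
def edges : ∀ {u v : V}, G.Walk u v → List G.Edge
  | _, _, nil _ => []
  | _, _, cons e _ p => e :: p.edges

/-- The list of vertices visited by a walk, in order. -/
def support : ∀ {u v : V}, G.Walk u v → List V
  | u, _, nil _ => [u]
  | u, _, cons _ _ p => u :: p.support

end Walk

/-- `G.HasEDP u v k` : there are (at least) `k` pairwise edge-disjoint paths
between `u` and `v` in `G` (formalized as `k` pairwise edge-disjoint trails,
which is equivalent). -/
def HasEDP (G : Multigraph V) (u v : V) (k : ℕ) : Prop :=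
  ∃ P : Fin k → G.Walk u v,
    (∀ i, (P i).edges.Nodup) ∧
    ∀ i j, i ≠ j → ∀ e, e ∈ (P i).edges → e ∉ (P j).edges

/-- `G` is `k`-edge-connected: between any two distinct vertices there are at
least `k` pairwise edge-disjoint paths. -/
def EdgeConnected (G : Multigraph V) (k : ℕ) : Prop :=
  Nontrivial V ∧ ∀ u v : V, u ≠ v → G.HasEDP u v k

/-- `G` is exactly `k`-edge-connected: between any two distinct vertices there
are exactly `k` pairwise edge-disjoint paths (at least `k`, and not `k + 1`). -/
def ExactlyEdgeConnected (G : Multigraph V) (k : ℕ) : Prop :=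
  Nontrivial V ∧ ∀ u v : V, u ≠ v → G.HasEDP u v k ∧ ¬ G.HasEDP u v (k + 1)

/-- The degree of a vertex: the number of edges incident to it. -/
noncomputable def degree (G : Multigraph V) (v : V) : ℕ :=
  {e : G.Edge | v ∈ G.ends e}.ncard

/-- Two vertices are adjacent if some edge joins them. -/
def Adj (G : Multigraph V) (u v : V) : Prop := ∃ e : G.Edge, G.ends e = s(u, v)

/-- `G` restricted to `S` is connected (witnessed by walks staying inside `S`). -/
def ConnectedOn (G : Multigraph V) (S : Set V) : Prop :=
  ∀ u ∈ S, ∀ v ∈ S, ∃ p : G.Walk u v, ∀ x ∈ p.support, x ∈ S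

/-- A multigraph is connected if it is nonempty and any two vertices are
joined by a walk. -/
def Connected (G : Multigraph V) : Prop :=
  Nonempty V ∧ ∀ u v : V, Nonempty (G.Walk u v)

/-- A multigraph is 2-vertex-connected (biconnected) if it is connected and
removing any single vertex leaves it connected. -/
def Biconnected (G : Multigraph V) : Prop :=
  G.Connected ∧ ∀ x : V, G.ConnectedOn {x}ᶜ

/-- A closed walk is a cycle if it repeats no edge, repeats no vertex except
the base point, and has length at least 2 (a double edge is a cycle of
length 2; loops are excluded since multigraphs are loopless). -/
def IsCycle {G : Multigraph V} {v : V} (p : G.Walk v v) : Prop :=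
  p.edges.Nodup ∧ p.support.tail.Nodup ∧ 2 ≤ p.edges.length

/-- A closed walk is chordless if no edge outside of it joins two of its
vertices (a parallel copy of one of its edges counts as a chord). -/
def IsChordless {G : Multigraph V} {v : V} (p : G.Walk v v) : Prop :=
  ∀ e : G.Edge, e ∉ p.edges → ∀ x y : V, G.ends e = s(x, y) →
    x ∈ p.support → y ∈ p.support → False

/-- `G.ReachAvoid S x y`: there is a walk from `x` to `y` avoiding the set `S`. -/
def ReachAvoid (G : Multigraph V) (S : Set V) (x y : V) : Prop :=
  ∃ p : G.Walk x y, ∀ z ∈ p.support, z ∉ S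

/-- The vertex sets of the connected components of `G ∖ S`.  For a cycle (or
any subgraph) `C`, the `C`-partition of the paper consists of `C` together
with these components; its size is the number of components. -/
def componentsAvoiding (G : Multigraph V) (S : Set V) : Set (Set V) :=
  {T | ∃ x, x ∉ S ∧ T = {y | G.ReachAvoid S x y}}

/-- Contract the (nonempty) vertex set `S` of `G` to a single new vertex
(`none`), deleting the edges inside `S`. -/
noncomputable def contractSet (G : Multigraph V) (S : Set V) :
    Multigraph (Option {x : V // x ∉ S}) where
  Edge := {e : G.Edge // ¬ ∀ x ∈ G.ends e, x ∈ S}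
  ends e := (G.ends e.1).map fun x => if h : x ∈ S then none else some ⟨x, h⟩
  loopless := by
    rintro ⟨e, he⟩ hd
    obtain ⟨x, y, hxy⟩ := exists_pair_eq (G.ends e)
    have hxyne : x ≠ y := by
      have h0 := G.loopless e
      rw [hxy, Sym2.mk_isDiag_iff] at h0
      exact h0
    have hor : x ∉ S ∨ y ∉ S := by
      by_contra hcon
      push_neg at hcon
      refine he fun z hz => ?_
      rw [hxy, Sym2.mem_iff] at hz
      rcases hz with rfl | rfl
      exacts [hcon.1, hcon.2]
    simp only [hxy, Sym2.map_pair_eq, Sym2.mk_isDiag_iff] at hd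
    rcases hor with hx | hy
    · rw [dif_neg hx] at hd
      by_cases hy : y ∈ S
      · rw [dif_pos hy] at hd; exact nomatch hd
      · rw [dif_neg hy] at hd
        exact hxyne (congrArg Subtype.val (Option.some_injective _ hd))
    · rw [dif_neg hy] at hd
      by_cases hx : x ∈ S
      · rw [dif_pos hx] at hd; exact nomatch hd
      · rw [dif_neg hx] at hd
        exact hxyne (congrArg Subtype.val (Option.some_injective _ hd))
  edge_finite := by
    have := G.edge_finite
    exact inferInstance

/-- The subgraph of `G` induced by the vertex set `S`. -/
noncomputable def induce (G : Multigraph V) (S : Set V) : Multigraph ↥S where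
  Edge := {e : G.Edge // ∀ x ∈ G.ends e, x ∈ S}
  ends e := sym2RestrictP (· ∈ S) (G.ends e.1) e.2
  loopless := fun e => sym2RestrictP_not_isDiag _ _ _ (G.loopless e.1)
  edge_finite := by
    have := G.edge_finite
    exact inferInstance

/-- Isomorphism of multigraphs. -/
structure Iso {V W : Type} (G : Multigraph V) (H : Multigraph W) where
  vmap : V ≃ W
  emap : G.Edge ≃ H.Edge
  ends_vmap : ∀ e : G.Edge, H.ends (emap e) = (G.ends e).map vmap

/-- `G` is quasi `k`-regular: at most one vertex has degree different from `k`. -/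
def QuasiRegular (G : Multigraph V) (k : ℕ) : Prop :=
  {v : V | G.degree v ≠ k}.Subsingleton

end Multigraph
namespace Multigraph

open scoped Classical

variable {V : Type}

/-- Block gluing: identify the vertex `u₁` of `G₁` with the vertex `u₂` of `G₂`
(the identified vertex is represented by `Sum.inl u₁`), keeping all edges. -/
noncomputable def blockGlue {V₁ V₂ : Type} (G₁ : Multigraph V₁) (G₂ : Multigraph V₂)
    (u₁ : V₁) (u₂ : V₂) : Multigraph (V₁ ⊕ {y : V₂ // y ≠ u₂}) where
  Edge := G₁.Edge ⊕ G₂.Edge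
  ends e :=
    match e with
    | .inl e => (G₁.ends e).map Sum.inl
    | .inr e => (G₂.ends e).map fun y => if h : y = u₂ then Sum.inl u₁ else Sum.inr ⟨y, h⟩
  loopless := by
    rintro (e | e) hd
    · exact map_not_isDiag _ _ (fun x _ y _ h => Sum.inl_injective h) (G₁.loopless e) hd
    · refine map_not_isDiag _ _ (fun x _ y _ h => ?_) (G₂.loopless e) hd
      by_cases hx : x = u₂ <;> by_cases hy : y = u₂
      · rw [hx, hy]
      · simp [hx, hy] at h
      · simp [hx, hy] at h
      · simp [hx, hy] at h
        exact h
  edge_finite := by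
    have := G₁.edge_finite; have := G₂.edge_finite
    exact inferInstance

/-- `k`-bridge addition: add a new vertex (`none`) joined to the existing
vertex `v` by `k` parallel edges. -/
def bridgeAdd (G : Multigraph V) (v : V) (k : ℕ) : Multigraph (Option V) where
  Edge := G.Edge ⊕ Fin k
  ends e :=
    match e with
    | .inl e => (G.ends e).map some
    | .inr _ => s(none, some v)
  loopless := by
    rintro (e | i) hd
    · exact map_not_isDiag _ _ (fun x _ y _ h => Option.some_injective _ h) (G.loopless e) hd
    · rw [Sym2.mk_isDiag_iff] at hd
      exact nomatch hd
  edge_finite := by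
    have := G.edge_finite
    exact inferInstance

end Multigraph
namespace Multigraph

open scoped Classical

variable {V : Type}

lemma other_ne {G : Multigraph V} {u : V} {e : G.Edge} (h : u ∈ G.ends e) :
    Sym2.Mem.other h ≠ u := by
  intro heq
  have hs := Sym2.other_spec h
  rw [heq] at hs
  have hl := G.loopless e
  rw [← hs, Sym2.mk_isDiag_iff] at hl
  exact hl rfl

/-- Vertex gluing: given vertices `u₁` of `G₁` and `u₂` of `G₂`, both of degree
`k` (witnessed by enumerations `ι₁`, `ι₂` of their incident edges), delete
`u₁` and `u₂` and join, for each `i`, the other endpoint of the `i`-th edge at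
`u₁` to the other endpoint of the `i`-th edge at `u₂`. -/
noncomputable def vertexGlue {V₁ V₂ : Type} (G₁ : Multigraph V₁) (G₂ : Multigraph V₂)
    (u₁ : V₁) (u₂ : V₂) {k : ℕ}
    (ι₁ : Fin k ≃ {e : G₁.Edge // u₁ ∈ G₁.ends e})
    (ι₂ : Fin k ≃ {e : G₂.Edge // u₂ ∈ G₂.ends e}) :
    Multigraph ({x : V₁ // x ≠ u₁} ⊕ {y : V₂ // y ≠ u₂}) where
  Edge := {e : G₁.Edge // u₁ ∉ G₁.ends e} ⊕ {e : G₂.Edge // u₂ ∉ G₂.ends e} ⊕ Fin k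
  ends e :=
    match e with
    | .inl e =>
        (sym2RestrictP (· ≠ u₁) (G₁.ends e.1) fun x hx hxe => e.2 (hxe ▸ hx)).map Sum.inl
    | .inr (.inl e) =>
        (sym2RestrictP (· ≠ u₂) (G₂.ends e.1) fun y hy hye => e.2 (hye ▸ hy)).map Sum.inr
    | .inr (.inr i) =>
        s(Sum.inl ⟨Sym2.Mem.other (ι₁ i).2, other_ne (ι₁ i).2⟩,
          Sum.inr ⟨Sym2.Mem.other (ι₂ i).2, other_ne (ι₂ i).2⟩)
  loopless := by
    rintro (e | e | i) hd
    · exact map_not_isDiag _ _ (fun x _ y _ h => Sum.inl_injective h)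
        (sym2RestrictP_not_isDiag _ _ _ (G₁.loopless e.1)) hd
    · exact map_not_isDiag _ _ (fun x _ y _ h => Sum.inr_injective h)
        (sym2RestrictP_not_isDiag _ _ _ (G₂.loopless e.1)) hd
    · rw [Sym2.mk_isDiag_iff] at hd
      exact nomatch hd
  edge_finite := by
    have := G₁.edge_finite; have := G₂.edge_finite
    exact inferInstance

/-- Cycle expansion: replace the vertex `u`, of degree `d` with incident edges
enumerated by `ι`, by a cycle on `d'` new vertices `u_0, …, u_{d'-1}`
(`2 ≤ d' ≤ d`); the `i`-th former edge at `u` is attached to `u_i` for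
`i < d' - 1` and to `u_{d'-1}` for `i ≥ d' - 1`, so each of `u_0, …, u_{d'-2}`
receives exactly one of them and `u_{d'-1}` receives the rest. -/
noncomputable def cycleExpand (G : Multigraph V) (u : V) {d d' : ℕ}
    (h2 : 2 ≤ d') (hdd : d' ≤ d)
    (ι : Fin d ≃ {e : G.Edge // u ∈ G.ends e}) :
    Multigraph ({x : V // x ≠ u} ⊕ Fin d') where
  Edge := {e : G.Edge // u ∉ G.ends e} ⊕ (Fin d ⊕ Fin d')
  ends e :=
    match e with
    | .inl e =>
        (sym2RestrictP (· ≠ u) (G.ends e.1) fun x hx hxe => e.2 (hxe ▸ hx)).map Sum.inl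
    | .inr (.inl i) =>
        s(Sum.inr ⟨min i.1 (d' - 1), by omega⟩,
          Sum.inl ⟨Sym2.Mem.other (ι i).2, other_ne (ι i).2⟩)
    | .inr (.inr j) =>
        s(Sum.inr j, Sum.inr ⟨(j.1 + 1) % d', Nat.mod_lt _ (by omega)⟩)
  loopless := by
    rintro (e | i | j) hd
    · exact map_not_isDiag _ _ (fun x _ y _ h => Sum.inl_injective h)
        (sym2RestrictP_not_isDiag _ _ _ (G.loopless e.1)) hd
    · rw [Sym2.mk_isDiag_iff] at hd
      exact nomatch hd
    · rw [Sym2.mk_isDiag_iff] at hd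
      have hj : j.1 < d' := j.2
      have := congrArg Fin.val (Sum.inr_injective hd)
      simp only at this
      rcases Nat.lt_or_ge (j.1 + 1) d' with h | h
      · rw [Nat.mod_eq_of_lt h] at this; omega
      · have hj1 : j.1 + 1 = d' := by omega
        rw [hj1, Nat.mod_self] at this; omega
  edge_finite := by
    have := G.edge_finite
    exact inferInstance

end Multigraph
namespace Multigraph

open scoped Classical

variable {V : Type}

/-- The edges of `G` crossing the vertex bipartition `⟨A, Aᶜ⟩`. -/
def cutEdges (G : Multigraph V) (A : Set V) : Set G.Edge :=
  {e | (∃ x ∈ G.ends e, x ∈ A) ∧ ∃ y ∈ G.ends e, y ∉ A}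

/-- The bipartition `⟨A, Aᶜ⟩` is a minimum edge cut of `G`: both sides are
nonempty and no other bipartition has fewer crossing edges. -/
def IsMinCut (G : Multigraph V) (A : Set V) : Prop :=
  A.Nonempty ∧ Aᶜ.Nonempty ∧
    ∀ B : Set V, B.Nonempty → Bᶜ.Nonempty →
      (G.cutEdges A).ncard ≤ (G.cutEdges B).ncard

/-- One side of a vertex splitting: keep the side `A` of the cut `⟨A, Aᶜ⟩`,
delete the other side, and reattach each cut edge to a single new vertex
(`none`). -/
noncomputable def splitSide (G : Multigraph V) (A : Set V) :
    Multigraph (Option {x : V // x ∈ A}) where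
  Edge := {e : G.Edge // ∀ x ∈ G.ends e, x ∈ A} ⊕ {e : G.Edge // e ∈ G.cutEdges A}
  ends e :=
    match e with
    | .inl e => (sym2RestrictP (· ∈ A) (G.ends e.1) e.2).map some
    | .inr e =>
        s(none, some ⟨Classical.choose e.2.1, (Classical.choose_spec e.2.1).2⟩)
  loopless := by
    rintro (e | e) hd
    · exact map_not_isDiag _ _ (fun x _ y _ h => Option.some_injective _ h)
        (sym2RestrictP_not_isDiag _ _ _ (G.loopless e.1)) hd
    · rw [Sym2.mk_isDiag_iff] at hd
      exact nomatch hd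
  edge_finite := by
    have := G.edge_finite
    exact inferInstance

/-- The dumbbell graph: two vertices joined by three parallel edges. -/
def dumbbell : Multigraph (Fin 2) where
  Edge := Fin 3
  ends _ := s(0, 1)
  loopless := fun _ h => absurd (Sym2.mk_isDiag_iff.mp h) (by decide)
  edge_finite := inferInstance

/-- `B` is (the vertex set of) a block of `G`: a maximal set of vertices
inducing a connected, 2-vertex-connected subgraph. -/
def IsBlock (G : Multigraph V) (B : Set V) : Prop :=
  (G.induce B).Biconnected ∧
    ∀ B' : Set V, B ⊆ B' → (G.induce B').Biconnected → B' = B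

/-- The set of double edges of `G`, as unordered pairs of distinct parallel
edges. -/
def doubleEdges (G : Multigraph V) : Set (Sym2 G.Edge) :=
  {z | ∃ e f : G.Edge, z = s(e, f) ∧ e ≠ f ∧ G.ends e = G.ends f}

/-- A collapsible cycle: a chordless, non-articulation cycle, all but at most
one of whose vertices have degree 3, whose contraction to a single vertex
yields an exactly 3-edge-connected multigraph. -/
def IsCollapsible {G : Multigraph V} {v : V} (p : G.Walk v v) : Prop :=
  IsCycle p ∧ IsChordless p ∧
    (G.componentsAvoiding {x | x ∈ p.support}).Subsingleton ∧
    {x : V | x ∈ p.support ∧ G.degree x ≠ 3}.Subsingleton ∧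
    (G.contractSet {x | x ∈ p.support}).ExactlyEdgeConnected 3

end Multigraph
namespace Multigraph

open scoped Classical

variable {V : Type}

/-- Smooth out the degree-two vertex `x` (whose two incident edges are
`e₁ = (x, a)` and `e₂ = (x, b)`): delete `x`, `e₁` and `e₂` and add a single
new edge joining `a` and `b`. -/
noncomputable def smoothAt {S : Set V} (H : Multigraph ↥S) (x a b : ↥S)
    (e₁ e₂ : H.Edge) (hne : e₁ ≠ e₂)
    (h₁ : H.ends e₁ = s(x, a)) (h₂ : H.ends e₂ = s(x, b))
    (hax : a ≠ x) (hbx : b ≠ x) (hab : a ≠ b)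
    (hdeg : ∀ e : H.Edge, x ∈ H.ends e → e = e₁ ∨ e = e₂) :
    Multigraph ↥(S \ {(x : V)}) where
  Edge := {e : H.Edge // e ≠ e₁ ∧ e ≠ e₂} ⊕ Unit
  ends e :=
    match e with
    | .inl e =>
        (sym2RestrictP (fun y : ↥S => y ≠ x) (H.ends e.1)
            (fun y hy hyx => by
              subst hyx
              rcases hdeg e.1 hy with h | h
              exacts [e.2.1 h, e.2.2 h])).map
          fun y => ⟨y.1.1, y.1.2, fun hh => y.2 (Subtype.ext hh)⟩
    | .inr _ =>
        s(⟨a.1, a.2, fun hh => hax (Subtype.ext hh)⟩,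
          ⟨b.1, b.2, fun hh => hbx (Subtype.ext hh)⟩)
  loopless := by
    rintro (e | e) hd
    · refine map_not_isDiag _ _ (fun y _ z _ h => ?_)
        (sym2RestrictP_not_isDiag _ _ _ (H.loopless e.1)) hd
      have hv := Subtype.ext_iff.mp h
      exact Subtype.ext (Subtype.ext hv)
    · rw [Sym2.mk_isDiag_iff] at hd
      have hv := Subtype.ext_iff.mp hd
      exact hab (Subtype.ext hv)
  edge_finite := by
    have := H.edge_finite
    exact inferInstance

/-- `SmoothSeq H K` : the multigraph `K` is obtained from `H` by a finite
sequence of smoothings of degree-two vertices. -/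
inductive SmoothSeq {V : Type} : ∀ {S T : Set V}, Multigraph ↥S → Multigraph ↥T → Prop
  | refl {S : Set V} (H : Multigraph ↥S) : SmoothSeq H H
  | step {S T : Set V} {H : Multigraph ↥S} {K : Multigraph ↥T}
      (x a b : ↥S) (e₁ e₂ : H.Edge) (hne : e₁ ≠ e₂)
      (h₁ : H.ends e₁ = s(x, a)) (h₂ : H.ends e₂ = s(x, b))
      (hax : a ≠ x) (hbx : b ≠ x) (hab : a ≠ b)
      (hdeg : ∀ e : H.Edge, x ∈ H.ends e → e = e₁ ∨ e = e₂) :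
      SmoothSeq (smoothAt H x a b e₁ e₂ hne h₁ h₂ hax hbx hab hdeg) K → SmoothSeq H K

/-- `G` is a 3-thick tree: it is obtained from a tree by replacing every tree
edge by three parallel edges. -/
def IsThreeThickTree (G : Multigraph V) : Prop :=
  ∃ T : SimpleGraph V, T.IsTree ∧
    ∃ f : G.Edge ≃ T.edgeSet × Fin 3, ∀ e : G.Edge, G.ends e = ((f e).1 : Sym2 V)

/-- The graphs obtainable from dumbbell graphs by cycle expansions and block
gluings (up to isomorphism). -/
inductive Synth3 : ∀ {V : Type}, Multigraph V → Prop
  | dumbbell : Synth3 dumbbell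
  | glue {V₁ V₂ : Type} {G₁ : Multigraph V₁} {G₂ : Multigraph V₂} (u₁ : V₁) (u₂ : V₂) :
      Synth3 G₁ → Synth3 G₂ → Synth3 (blockGlue G₁ G₂ u₁ u₂)
  | expand {V : Type} {G : Multigraph V} (u : V) {d d' : ℕ} (h2 : 2 ≤ d') (hdd : d' ≤ d)
      (ι : Fin d ≃ {e : G.Edge // u ∈ G.ends e}) :
      Synth3 G → Synth3 (G.cycleExpand u h2 hdd ι)
  | iso {V W : Type} {G : Multigraph V} {H : Multigraph W} :
      Synth3 G → Iso G H → Synth3 H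

/-- The graphs obtainable from 3-thick trees by block-respecting cycle
expansions (cycle expansions whose new cycle lies inside a single block of the
resulting graph), up to isomorphism. -/
inductive BRSynth : ∀ {V : Type}, Multigraph V → Prop
  | base {V : Type} {G : Multigraph V} : IsThreeThickTree G → BRSynth G
  | expand {V : Type} {G : Multigraph V} (u : V) {d d' : ℕ} (h2 : 2 ≤ d') (hdd : d' ≤ d)
      (ι : Fin d ≃ {e : G.Edge // u ∈ G.ends e})
      (hblock : ∃ B : Set ({x : V // x ≠ u} ⊕ Fin d'),
        (G.cycleExpand u h2 hdd ι).IsBlock B ∧ ∀ j : Fin d', Sum.inr j ∈ B) :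
      BRSynth G → BRSynth (G.cycleExpand u h2 hdd ι)
  | iso {V W : Type} {G : Multigraph V} {H : Multigraph W} :
      BRSynth G → Iso G H → BRSynth H

end Multigraph
namespace Multigraph

open scoped Classical

variable {V : Type}

namespace Walk

variable {G : Multigraph V}

/-- Concatenation of walks. -/
def append : ∀ {a b c : V}, G.Walk a b → G.Walk b c → G.Walk a c
  | _, _, _, .nil _, q => q
  | _, _, _, .cons e he p, q => .cons e he (p.append q)

lemma edges_append : ∀ {a b c : V} (p : G.Walk a b) (q : G.Walk b c),
    (p.append q).edges = p.edges ++ q.edges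
  | _, _, _, .nil _, _ => rfl
  | _, _, _, .cons e he p, q => by
      simp [append, edges, edges_append p q]

end Walk

/-- Lift a walk of `G` to a walk of `G.bridgeAdd v k`. -/
def liftWalk (G : Multigraph V) (v : V) (k : ℕ) :
    ∀ {x y : V}, G.Walk x y → (G.bridgeAdd v k).Walk (some x) (some y)
  | _, _, .nil x => .nil (some x)
  | _, _, .cons e he p =>
      .cons (Sum.inl e)
        (show (G.ends e).map some = _ by rw [he, Sym2.map_pair_eq]) (G.liftWalk v k p)

lemma edges_liftWalk (G : Multigraph V) (v : V) (k : ℕ) :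
    ∀ {x y : V} (p : G.Walk x y),
      (G.liftWalk v k p).edges = p.edges.map Sum.inl
  | _, _, .nil _ => rfl
  | _, _, .cons e he p => by
      simp [liftWalk, Walk.edges, edges_liftWalk G v k p]
      rfl

/-- Project a walk of `G.bridgeAdd v k` down to a walk of `G`, replacing the
new vertex by `v` and deleting the bridge edges. -/
lemma exists_proj (G : Multigraph V) (v : V) (k : ℕ) :
    ∀ {a b : Option V} (p : (G.bridgeAdd v k).Walk a b),
      ∃ q : G.Walk (a.getD v) (b.getD v),
        q.edges = p.edges.filterMap Sum.getLeft? := by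
  intro a b p
  induction p with
  | nil a => exact ⟨.nil _, rfl⟩
  | @cons a c b e he p ih =>
    rcases e with e | i
    · obtain ⟨x, y, hxy⟩ := exists_pair_eq (G.ends e)
      have he2 : (G.ends e).map some = s(a, c) := he
      have he' : s(some x, some y) = s(a, c) := by
        rw [← he2, hxy, Sym2.map_pair_eq]
      obtain ⟨q, hq⟩ := ih
      rcases Sym2.eq_iff.mp he' with ⟨ha, hc⟩ | ⟨hc, ha⟩
      · subst ha; subst hc
        refine ⟨.cons e hxy q, ?_⟩
        simp [Walk.edges, hq]
        rfl
      · subst ha; subst hc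
        refine ⟨.cons e (hxy.trans Sym2.eq_swap) q, ?_⟩
        simp [Walk.edges, hq]
        rfl
    · have he2 : s(none, some v) = s(a, c) := he
      obtain ⟨q, hq⟩ := ih
      rcases Sym2.eq_iff.mp he2 with ⟨ha, hc⟩ | ⟨hc, ha⟩
      · subst ha; subst hc
        exact ⟨q, by simp [Walk.edges, hq]; rfl⟩
      · subst ha; subst hc
        exact ⟨q, by simp [Walk.edges, hq]; rfl⟩

/-- Any walk of `G.bridgeAdd v k` between distinct vertices, one of which is
the new vertex, uses a bridge edge. -/
lemma exists_inr (G : Multigraph V) (v : V) (k : ℕ) :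
    ∀ {a b : Option V} (p : (G.bridgeAdd v k).Walk a b),
      a ≠ b → (a = none ∨ b = none) → ∃ i : Fin k, Sum.inr i ∈ p.edges := by
  intro a b p
  induction p with
  | nil a => exact fun hab _ => absurd rfl hab
  | @cons a c b e he p ih =>
    intro hab hnone
    rcases e with e | i
    · have he2 : (G.ends e).map some = s(a, c) := he
      have ha : ∃ z, a = some z := by
        have hm : a ∈ s(a, c) := Sym2.mem_mk_left a c
        rw [← he2] at hm
        obtain ⟨z, _, hz⟩ := Sym2.mem_map.mp hm
        exact ⟨z, hz.symm⟩
      have hc : ∃ z, c = some z := by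
        have hm : c ∈ s(a, c) := Sym2.mem_mk_right a c
        rw [← he2] at hm
        obtain ⟨z, _, hz⟩ := Sym2.mem_map.mp hm
        exact ⟨z, hz.symm⟩
      obtain ⟨za, rfl⟩ := ha
      obtain ⟨zc, rfl⟩ := hc
      rcases hnone with h | h
      · exact nomatch h
      · obtain ⟨i, hi⟩ := ih (by simp [h]) (Or.inr h)
        exact ⟨i, List.mem_cons_of_mem _ hi⟩
    · exact ⟨i, List.mem_cons_self⟩

/-- **`k`-bridge addition preserves exact `k`-edge-connectivity.**  If `G₁` is
exactly `k`-edge-connected, `v` is a vertex of `G₁`, and `G` is obtained from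
`G₁` by adding one new vertex joined to `v` by `k` parallel edges, then `G` is
exactly `k`-edge-connected. -/
theorem bridgeAdd_exactlyEdgeConnected {V₁ : Type} (G₁ : Multigraph V₁) (v : V₁)
    (k : ℕ) (h : G₁.ExactlyEdgeConnected k) :
    (G₁.bridgeAdd v k).ExactlyEdgeConnected k := by
  obtain ⟨hnt, hG⟩ := h
  refine ⟨⟨none, some v, fun hc => nomatch hc⟩, ?_⟩
  -- edge-disjoint trails between `v` and any vertex of `G₁` (trivial if equal)
  have lowerFrom : ∀ x : V₁, ∃ Q : Fin k → G₁.Walk v x,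
      (∀ i, (Q i).edges.Nodup) ∧
      ∀ i j, i ≠ j → ∀ e, e ∈ (Q i).edges → e ∉ (Q j).edges := by
    intro x
    by_cases hx : x = v
    · subst hx
      exact ⟨fun _ => .nil x, fun _ => List.nodup_nil,
        fun _ _ _ e he => (List.not_mem_nil he).elim⟩
    · exact (hG v x (Ne.symm hx)).1
  have lowerTo : ∀ x : V₁, ∃ Q : Fin k → G₁.Walk x v,
      (∀ i, (Q i).edges.Nodup) ∧
      ∀ i j, i ≠ j → ∀ e, e ∈ (Q i).edges → e ∉ (Q j).edges := by
    intro x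
    by_cases hx : x = v
    · subst hx
      exact ⟨fun _ => .nil x, fun _ => List.nodup_nil,
        fun _ _ _ e he => (List.not_mem_nil he).elim⟩
    · exact (hG x v hx).1
  intro a b hab
  constructor
  · -- lower bound: `k` edge-disjoint trails exist
    match a, b with
    | none, none => exact absurd rfl hab
    | none, some y =>
      obtain ⟨Q, hQ1, hQ2⟩ := lowerFrom y
      refine ⟨fun i => .cons (Sum.inr i) rfl (G₁.liftWalk v k (Q i)), ?_, ?_⟩
      · intro i
        simp only [Walk.edges, edges_liftWalk]
        refine List.nodup_cons.mpr ⟨?_, ?_⟩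
        · intro hm
          obtain ⟨e', _, h1⟩ := List.mem_map.mp hm
          exact nomatch h1
        · exact (hQ1 i).map (fun _ _ h => Sum.inl.inj h)
      · intro i j hij e hei hej
        simp only [Walk.edges, edges_liftWalk, List.mem_cons, List.mem_map] at hei hej
        rcases List.mem_cons.mp hei with rfl | hei
        · rcases List.mem_cons.mp hej with h1 | hej
          · exact hij (Sum.inr_injective h1)
          · obtain ⟨e', _, h1⟩ := List.mem_map.mp hej
            exact nomatch h1
        · obtain ⟨e', he', rfl⟩ := List.mem_map.mp hei
          rcases List.mem_cons.mp hej with h1 | hej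
          · exact nomatch h1
          · obtain ⟨e'', he'', h1⟩ := List.mem_map.mp hej
            exact hQ2 i j hij e' he' ((Sum.inl.inj h1) ▸ he'')
    | some x, none =>
      obtain ⟨Q, hQ1, hQ2⟩ := lowerTo x
      refine ⟨fun i => (G₁.liftWalk v k (Q i)).append
        (.cons (Sum.inr i) Sym2.eq_swap (.nil none)), ?_, ?_⟩
      · intro i
        simp only [Walk.edges_append, edges_liftWalk, Walk.edges]
        refine List.nodup_append.mpr ⟨(hQ1 i).map (fun _ _ h => Sum.inl.inj h), List.nodup_singleton _, ?_⟩
        intro e he b hb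
        obtain ⟨e', _, rfl⟩ := List.mem_map.mp he
        rw [List.mem_singleton.mp hb]
        exact fun h1 => nomatch h1
      · intro i j hij e hei hej
        simp only [Walk.edges_append, edges_liftWalk, Walk.edges, List.mem_append,
          List.mem_map, List.mem_cons, List.not_mem_nil, or_false] at hei hej
        rcases List.mem_append.mp hei with hei | hei
        · obtain ⟨e', he', rfl⟩ := List.mem_map.mp hei
          rcases List.mem_append.mp hej with hej | hej
          · obtain ⟨e'', he'', h1⟩ := List.mem_map.mp hej
            exact hQ2 i j hij e' he' ((Sum.inl.inj h1) ▸ he'')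
          · exact nomatch (List.mem_singleton.mp hej)
        · rw [List.mem_singleton.mp hei] at hej
          rcases List.mem_append.mp hej with hej | hej
          · obtain ⟨e'', _, h1⟩ := List.mem_map.mp hej
            exact nomatch h1
          · exact hij (Sum.inr_injective (List.mem_singleton.mp hej))
    | some x, some y =>
      have hxy : x ≠ y := fun hh => hab (by rw [hh])
      obtain ⟨Q, hQ1, hQ2⟩ := (hG x y hxy).1
      refine ⟨fun i => G₁.liftWalk v k (Q i), ?_, ?_⟩
      · intro i
        rw [edges_liftWalk]
        exact (hQ1 i).map (fun _ _ h => Sum.inl.inj h)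
      · intro i j hij e hei hej
        rw [edges_liftWalk] at hei hej
        obtain ⟨e', he', rfl⟩ := List.mem_map.mp hei
        obtain ⟨e'', he'', h1⟩ := List.mem_map.mp hej
        exact hQ2 i j hij e' he' ((Sum.inl.inj h1) ▸ he'')
  · -- upper bound: no `k+1` edge-disjoint trails
    rintro ⟨P, hP1, hP2⟩
    by_cases hnone : a = none ∨ b = none
    · have hf : ∀ i : Fin (k + 1), ∃ j : Fin k, Sum.inr j ∈ (P i).edges :=
        fun i => exists_inr G₁ v k (P i) hab hnone
      choose f hfm using hf
      have finj : Function.Injective f := by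
        intro i j hij
        by_contra hne
        exact hP2 i j hne _ (hfm i) (hij ▸ hfm j)
      have hcard := Fintype.card_le_of_injective f finj
      simp only [Fintype.card_fin] at hcard
      omega
    · push_neg at hnone
      obtain ⟨x, rfl⟩ := Option.ne_none_iff_exists'.mp hnone.1
      obtain ⟨y, rfl⟩ := Option.ne_none_iff_exists'.mp hnone.2
      have hxy : x ≠ y := fun hh => hab (by rw [hh])
      refine (hG x y hxy).2 ?_
      choose Q hQ using fun i => exists_proj G₁ v k (P i)
      refine ⟨Q, ?_, ?_⟩
      · intro i
        rw [hQ i]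
        refine List.Nodup.filterMap ?_ (hP1 i)
        rintro (a | a) (b | b) c hc hc' <;> simp_all
      · intro i j hij e hei hej
        rw [hQ i] at hei
        rw [hQ j] at hej
        obtain ⟨e1, he1, he1'⟩ := List.mem_filterMap.mp hei
        obtain ⟨e2, he2, he2'⟩ := List.mem_filterMap.mp hej
        rcases e1 with e1 | e1
        · rcases e2 with e2 | e2
          · simp only [Sum.getLeft?] at he1' he2'
            rw [Option.some.inj he1'] at he1
            rw [Option.some.inj he2'] at he2
            exact hP2 i j hij _ he1 he2
          · exact nomatch he2'
        · exact nomatch he1'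

end Multigraph
end

section
/- Let G = (V, E) be an exactly 3-edge-connected and 2-vertex-connected multigraph, let u be a vertex of G of degree d with neighbors v_1,...,v_d listed with multiplicity, and let 2 ≤ d' ≤ d. Let G' be obtained from G by the cycle expansion of u into a cycle u_1,...,u_{d'}: delete u, add the cycle on the new vertices u_1,...,u_{d'}, join u_i to v_i for 1 ≤ i ≤ d'-1, and join u_{d'} to v_i for d' ≤ i ≤ d. Then G' is exactly 3-edge-connected. -/
namespace Multigraph


open scoped Classical

variable {V : Type} {G : Multigraph V}

/-! ### Endpoint bookkeeping -/

noncomputable def fstV (G : Multigraph V) (e : G.Edge) : V :=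
  (exists_pair_eq (G.ends e)).choose

noncomputable def sndV (G : Multigraph V) (e : G.Edge) : V :=
  (exists_pair_eq (G.ends e)).choose_spec.choose

lemma ends_eq_fst_snd (G : Multigraph V) (e : G.Edge) :
    G.ends e = s(G.fstV e, G.sndV e) :=
  (exists_pair_eq (G.ends e)).choose_spec.choose_spec

/-- Tail of an edge traversed with direction `b`. -/
noncomputable def tlB (G : Multigraph V) (e : G.Edge) (b : Bool) : V :=
  if b then G.fstV e else G.sndV e

/-- Head of an edge traversed with direction `b`. -/
noncomputable def hdB (G : Multigraph V) (e : G.Edge) (b : Bool) : V :=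
  if b then G.sndV e else G.fstV e

lemma ends_eq_tlB_hdB (G : Multigraph V) (e : G.Edge) (b : Bool) :
    G.ends e = s(G.tlB e b, G.hdB e b) := by
  cases b <;> simp [tlB, hdB, ends_eq_fst_snd, Sym2.eq_swap]

lemma tlB_not (G : Multigraph V) (e : G.Edge) (b : Bool) :
    G.tlB e (!b) = G.hdB e b := by cases b <;> rfl

lemma hdB_not (G : Multigraph V) (e : G.Edge) (b : Bool) :
    G.hdB e (!b) = G.tlB e b := by cases b <;> rfl

lemma tlB_ne_hdB (G : Multigraph V) (e : G.Edge) (b : Bool) :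
    G.tlB e b ≠ G.hdB e b := by
  intro h
  have := G.loopless e
  rw [ends_eq_tlB_hdB G e b, Sym2.mk_isDiag_iff] at this
  exact this h

lemma tlB_mem_ends (G : Multigraph V) (e : G.Edge) (b : Bool) :
    G.tlB e b ∈ G.ends e := by
  rw [ends_eq_tlB_hdB G e b]; simp

lemma hdB_mem_ends (G : Multigraph V) (e : G.Edge) (b : Bool) :
    G.hdB e b ∈ G.ends e := by
  rw [ends_eq_tlB_hdB G e b]; simp

/-- If `x` is an endpoint of `e`, there is a direction whose tail is `x`. -/
lemma exists_dir_of_mem_ends {e : G.Edge} {x : V} (hx : x ∈ G.ends e) :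
    ∃ b : Bool, G.tlB e b = x := by
  rw [ends_eq_fst_snd G e, Sym2.mem_iff] at hx
  rcases hx with h | h
  · exact ⟨true, h.symm⟩
  · exact ⟨false, h.symm⟩

lemma mem_ends_iff_tlB_or_hdB {e : G.Edge} {x : V} (b : Bool) :
    x ∈ G.ends e ↔ (x = G.tlB e b ∨ x = G.hdB e b) := by
  rw [ends_eq_tlB_hdB G e b, Sym2.mem_iff]

/-! ### Walk basics -/

namespace Walk

lemma start_mem_support {x y : V} (p : G.Walk x y) : x ∈ p.support := by
  cases p <;> simp [support]

lemma end_mem_support {x y : V} (p : G.Walk x y) : y ∈ p.support := by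
  induction p with
  | nil v => simp [support]
  | cons e he p ih => simp [support, ih]

lemma mem_support_of_mem_edges {x y : V} (p : G.Walk x y) {e : G.Edge}
    (he : e ∈ p.edges) {w : V} (hw : w ∈ G.ends e) : w ∈ p.support := by
  induction p with
  | nil v => simp [edges] at he
  | @cons a v w e' he' p ih =>
    simp only [edges, List.mem_cons] at he
    rcases he with rfl | he
    · rw [he'] at hw
      rw [Sym2.mem_iff] at hw
      rcases hw with rfl | rfl
      · exact start_mem_support _
      · simp [support, start_mem_support]
    · simp [support, ih he]

end Walk

/-- Crossing lemma: a walk from inside `S` to outside `S` uses a cut edge. -/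
lemma exists_cut_edge_of_walk {S : Set V} {x y : V} (p : G.Walk x y) :
    x ∈ S → y ∉ S → ∃ e ∈ p.edges, e ∈ G.cutEdges S := by
  induction p with
  | nil v => intro hx hy; exact absurd hx hy
  | @cons a v w e he p ih =>
    intro hx hy
    by_cases hv : v ∈ S
    · obtain ⟨f, hf, hcut⟩ := ih hv hy
      exact ⟨f, by simp [Walk.edges, hf], hcut⟩
    · refine ⟨e, by simp [Walk.edges], ⟨a, ?_, hx⟩, ⟨v, ?_, hv⟩⟩
      · rw [he]; simp
      · rw [he]; simp

/-! ### Arc walks: walks made of directed edge traversals satisfying a predicate -/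

inductive AWalk (G : Multigraph V) (P : G.Edge → Bool → Prop) : V → V → Type
  | nil (v : V) : AWalk G P v v
  | cons {x y z : V} (e : G.Edge) (b : Bool) (hP : P e b) (ht : G.tlB e b = x)
      (hh : G.hdB e b = y) (p : AWalk G P y z) : AWalk G P x z

namespace AWalk

variable {P Q : G.Edge → Bool → Prop}

def arcs : ∀ {x y : V}, G.AWalk P x y → List (G.Edge × Bool)
  | _, _, nil _ => []
  | _, _, cons e b _ _ _ p => (e, b) :: p.arcs

def supportA : ∀ {x y : V}, G.AWalk P x y → List V
  | x, _, nil _ => [x]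
  | x, _, cons _ _ _ _ _ p => x :: p.supportA

lemma arcs_prop : ∀ {x y : V} (p : G.AWalk P x y), ∀ a ∈ p.arcs, P a.1 a.2
  | _, _, nil _ => by simp [arcs]
  | _, _, cons e b hP ht hh p => by
    intro a ha
    simp only [arcs, List.mem_cons] at ha
    rcases ha with rfl | ha
    · exact hP
    · exact arcs_prop p a ha

lemma start_mem_supportA : ∀ {x y : V} (p : G.AWalk P x y), x ∈ p.supportA
  | _, _, nil _ => by simp [supportA]
  | _, _, cons e b hP ht hh p => by simp [supportA]

lemma end_mem_supportA : ∀ {x y : V} (p : G.AWalk P x y), y ∈ p.supportA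
  | _, _, nil _ => by simp [supportA]
  | _, _, cons e b hP ht hh p => by simp [supportA, end_mem_supportA p]

lemma arc_tl_mem_supportA : ∀ {x y : V} (p : G.AWalk P x y), ∀ a ∈ p.arcs,
    G.tlB a.1 a.2 ∈ p.supportA ∧ G.hdB a.1 a.2 ∈ p.supportA
  | _, _, nil _ => by simp [arcs]
  | _, _, cons e b hP ht hh p => by
    intro a ha
    simp only [arcs, List.mem_cons] at ha
    rcases ha with rfl | ha
    · constructor
      · simp [supportA, ht]
      · simp [supportA, hh, start_mem_supportA p]
    · have := arc_tl_mem_supportA p a ha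
      exact ⟨by simp [supportA, this.1], by simp [supportA, this.2]⟩

/-- Convert an arc walk to an ordinary walk. -/
def toWalk : ∀ {x y : V}, G.AWalk P x y → G.Walk x y
  | _, _, nil v => Walk.nil v
  | _, _, cons e b _ ht hh p =>
      Walk.cons e (by rw [ends_eq_tlB_hdB G e b, ht, hh]) p.toWalk

lemma toWalk_edges : ∀ {x y : V} (p : G.AWalk P x y),
    p.toWalk.edges = p.arcs.map Prod.fst
  | _, _, nil _ => rfl
  | _, _, cons e b hP ht hh p => by
    simp [toWalk, Walk.edges, arcs, toWalk_edges p]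

/-- Weaken the arc predicate. -/
def mapP (h : ∀ e b, P e b → Q e b) : ∀ {x y : V}, G.AWalk P x y → G.AWalk Q x y
  | _, _, nil v => nil v
  | _, _, cons e b hP ht hh p => cons e b (h e b hP) ht hh (p.mapP h)

lemma mapP_arcs (h : ∀ e b, P e b → Q e b) : ∀ {x y : V} (p : G.AWalk P x y),
    (p.mapP h).arcs = p.arcs
  | _, _, nil _ => rfl
  | _, _, cons e b hP ht hh p => by simp [mapP, arcs, mapP_arcs h p]

/-- Append a single arc at the end. -/
noncomputable def snoc : ∀ {x y : V}, G.AWalk P x y → ∀ (e : G.Edge) (b : Bool), P e b →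
    G.tlB e b = y → G.AWalk P x (G.hdB e b)
  | _, _, nil v, e, b, hP, ht => cons e b hP ht rfl (nil _)
  | _, _, cons e' b' hP' ht' hh' p, e, b, hP, ht =>
      cons e' b' hP' ht' hh' (p.snoc e b hP ht)

noncomputable def scount (v : V) {x y : V} (p : G.AWalk P x y) : ℕ :=
  p.arcs.countP fun a => decide (G.tlB a.1 a.2 = v)

noncomputable def dcount (v : V) {x y : V} (p : G.AWalk P x y) : ℕ :=
  p.arcs.countP fun a => decide (G.hdB a.1 a.2 = v)

lemma count_key (v : V) {x₀ y₀ : V} (p : G.AWalk P x₀ y₀) :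
    scount v p + (if v = y₀ then 1 else 0) = dcount v p + (if v = x₀ then 1 else 0) := by
  induction p with
  | nil w => simp [scount, dcount, arcs]
  | @cons x y z e b hP ht hh p ih =>
    simp only [scount, dcount, arcs, List.countP_cons] at *
    have hb : (if (decide (G.tlB e b = v)) = true then 1 else 0) =
        (if v = x then 1 else 0) := by
      rw [ht]; by_cases h : v = x <;> simp [h, eq_comm]
    have hb' : (if (decide (G.hdB e b = v)) = true then 1 else 0) =
        (if v = y then 1 else 0) := by
      rw [hh]; by_cases h : v = y <;> simp [h, eq_comm]
    rw [hb, hb']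
    omega

/-- Extract a suffix starting at a vertex of the support. -/
lemma suffix_of_mem {x₀ y₀ : V} (p : G.AWalk P x₀ y₀) (v : V) :
    v ∈ p.supportA →
    ∃ q : G.AWalk P v y₀, q.supportA.IsSuffix p.supportA := by
  induction p with
  | nil w =>
    intro hv
    simp [supportA] at hv
    subst hv
    exact ⟨nil _, List.suffix_refl _⟩
  | @cons x y z e b hP ht hh p ih =>
    intro hv
    simp only [supportA, List.mem_cons] at hv
    by_cases hvx : v = x
    · subst hvx
      exact ⟨cons e b hP ht hh p, List.suffix_refl _⟩
    · have hv' : v ∈ p.supportA := by tauto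
      obtain ⟨q, hq⟩ := ih hv'
      exact ⟨q, hq.trans (List.suffix_cons _ _)⟩

lemma exists_nodup_supportA {x₀ y₀ : V} (p : G.AWalk P x₀ y₀) :
    ∃ q : G.AWalk P x₀ y₀, q.supportA.Nodup := by
  induction p with
  | nil v => exact ⟨nil v, by simp [supportA]⟩
  | @cons x y z e b hP ht hh p ih =>
    obtain ⟨q, hq⟩ := ih
    by_cases hx : x ∈ q.supportA
    · obtain ⟨r, hr⟩ := suffix_of_mem q x hx
      exact ⟨r, hr.sublist.nodup hq⟩
    · exact ⟨cons e b hP ht hh q, by simp [supportA, hq, hx]⟩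

lemma edges_nodup_of_supportA_nodup {x₀ y₀ : V} (p : G.AWalk P x₀ y₀) :
    p.supportA.Nodup → (p.arcs.map Prod.fst).Nodup := by
  induction p with
  | nil v => simp [arcs]
  | @cons x y z e b hP ht hh p ih =>
    intro hnd
    simp only [supportA, List.nodup_cons] at hnd
    simp only [arcs, List.map_cons, List.nodup_cons]
    refine ⟨?_, ih hnd.2⟩
    intro hmem
    simp only [List.mem_map] at hmem
    obtain ⟨⟨e', b'⟩, ha, he⟩ := hmem
    subst he
    have hm := arc_tl_mem_supportA p _ ha
    have hx : x ∈ G.ends e' := by rw [← ht]; exact tlB_mem_ends G e' b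
    rw [mem_ends_iff_tlB_or_hdB (e := e') (x := x) b'] at hx
    rcases hx with hx | hx
    · exact hnd.1 (hx ▸ hm.1)
    · exact hnd.1 (hx ▸ hm.2)

end AWalk

/-! ### Unit-capacity flows -/

noncomputable def outC (G : Multigraph V) (F : Finset G.Edge) (dir : G.Edge → Bool) (v : V) : ℕ :=
  (F.filter fun e => G.tlB e (dir e) = v).card

noncomputable def inC (G : Multigraph V) (F : Finset G.Edge) (dir : G.Edge → Bool) (v : V) : ℕ :=
  (F.filter fun e => G.hdB e (dir e) = v).card

noncomputable def dZ (G : Multigraph V) (F : Finset G.Edge) (dir : G.Edge → Bool) (v : V) : ℤ :=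
  (G.outC F dir v : ℤ) - G.inC F dir v

def IsFlow (G : Multigraph V) (a b : V) (F : Finset G.Edge) (dir : G.Edge → Bool)
    (k : ℤ) : Prop :=
  (∀ v, v ≠ a → v ≠ b → G.dZ F dir v = 0) ∧ G.dZ F dir a = k ∧ G.dZ F dir b = -k

lemma sum_filter_card (F : Finset G.Edge) (f : G.Edge → V) (T : Finset V) :
    ∑ v ∈ T, (F.filter fun e => f e = v).card = (F.filter fun e => f e ∈ T).card := by
  simp only [Finset.card_filter]
  rw [Finset.sum_comm]
  refine Finset.sum_congr rfl fun e _ => ?_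
  by_cases h : f e ∈ T
  · rw [if_pos h, Finset.sum_eq_single_of_mem (f e) h]
    · simp
    · intro v hv hne
      rw [if_neg (fun hh => hne (hh.symm))]
  · rw [if_neg h]
    refine Finset.sum_eq_zero fun v hv => ?_
    exact if_neg (fun hh => h (by rw [← hh] at hv; exact hv))

lemma card_filter_split (F : Finset G.Edge) (p q : G.Edge → Prop) :
    (F.filter fun e => p e).card =
      (F.filter fun e => p e ∧ q e).card + (F.filter fun e => p e ∧ ¬ q e).card := by
  rw [← Finset.filter_filter, ← Finset.filter_filter,
    Finset.card_filter_add_card_filter_not]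

lemma cross_card {a b : V} {k : ℤ} (F : Finset G.Edge) (dir : G.Edge → Bool)
    (S : Set V) (hf : G.IsFlow a b F dir k) (ha : a ∈ S) (hb : b ∉ S) :
    ((F.filter fun e => G.tlB e (dir e) ∈ S ∧ G.hdB e (dir e) ∉ S).card : ℤ)
      = k + (F.filter fun e => G.hdB e (dir e) ∈ S ∧ G.tlB e (dir e) ∉ S).card := by
  classical
  set T : Finset V := ((F.image (fun e => G.tlB e (dir e)) ∪
      F.image (fun e => G.hdB e (dir e))) ∪ {a}).filter (· ∈ S) with hT
  have haT : a ∈ T := by simp [hT, ha]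
  have hsum : ∑ v ∈ T, G.dZ F dir v = k := by
    rw [Finset.sum_eq_single_of_mem a haT]
    · exact hf.2.1
    · intro v hv hvne
      have hvS : v ∈ S := by
        simp only [hT, Finset.mem_filter] at hv
        exact hv.2
      exact hf.1 v hvne (fun h => hb (h ▸ hvS))
  have houts : ∑ v ∈ T, (G.outC F dir v : ℤ)
      = ((F.filter fun e => G.tlB e (dir e) ∈ S).card : ℤ) := by
    have h1 := sum_filter_card F (fun e => G.tlB e (dir e)) T
    have h2 : (F.filter fun e => G.tlB e (dir e) ∈ T)
        = (F.filter fun e => G.tlB e (dir e) ∈ S) := by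
      refine Finset.filter_congr fun e he => ?_
      simp only [hT, Finset.mem_filter, Finset.mem_union, Finset.mem_image,
        Finset.mem_singleton]
      constructor
      · tauto
      · intro hS
        exact ⟨Or.inl (Or.inl ⟨e, he, rfl⟩), hS⟩
    rw [← h2, ← h1]
    push_cast
    rfl
  have hins : ∑ v ∈ T, (G.inC F dir v : ℤ)
      = ((F.filter fun e => G.hdB e (dir e) ∈ S).card : ℤ) := by
    have h1 := sum_filter_card F (fun e => G.hdB e (dir e)) T
    have h2 : (F.filter fun e => G.hdB e (dir e) ∈ T)
        = (F.filter fun e => G.hdB e (dir e) ∈ S) := by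
      refine Finset.filter_congr fun e he => ?_
      simp only [hT, Finset.mem_filter, Finset.mem_union, Finset.mem_image,
        Finset.mem_singleton]
      constructor
      · tauto
      · intro hS
        exact ⟨Or.inl (Or.inr ⟨e, he, rfl⟩), hS⟩
    rw [← h2, ← h1]
    push_cast
    rfl
  have hdiff : ((F.filter fun e => G.tlB e (dir e) ∈ S).card : ℤ)
      - (F.filter fun e => G.hdB e (dir e) ∈ S).card = k := by
    rw [← houts, ← hins, ← Finset.sum_sub_distrib]
    exact hsum
  have hsplit1 := card_filter_split F (fun e => G.tlB e (dir e) ∈ S)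
    (fun e => G.hdB e (dir e) ∈ S)
  have hsplit2 := card_filter_split F (fun e => G.hdB e (dir e) ∈ S)
    (fun e => G.tlB e (dir e) ∈ S)
  have hcomm : (F.filter fun e => G.tlB e (dir e) ∈ S ∧ G.hdB e (dir e) ∈ S)
      = (F.filter fun e => G.hdB e (dir e) ∈ S ∧ G.tlB e (dir e) ∈ S) := by
    refine Finset.filter_congr fun e he => ?_
    tauto
  rw [hcomm] at hsplit1
  omega

/-! ### Residual reachability -/

/-- The residual arc predicate for a flow `(F, dir)`: edges of `F` may only be
traversed backwards, other edges in both directions. -/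
def resP (G : Multigraph V) (F : Finset G.Edge) (dir : G.Edge → Bool) :
    G.Edge → Bool → Prop :=
  fun e b => e ∈ F → b = !(dir e)

lemma residual_step {F : Finset G.Edge} {dir : G.Edge → Bool} {a z : V}
    (h : Nonempty (G.AWalk (G.resP F dir) a z)) {e : G.Edge} {b : Bool}
    (hP : G.resP F dir e b) (ht : G.tlB e b = z) :
    Nonempty (G.AWalk (G.resP F dir) a (G.hdB e b)) :=
  ⟨h.some.snoc e b hP ht⟩

lemma no_residual_cut {a b : V} {j : ℕ} (F : Finset G.Edge) (dir : G.Edge → Bool)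
    (hf : G.IsFlow a b F dir (j : ℤ))
    (hnr : ¬ Nonempty (G.AWalk (G.resP F dir) a b)) :
    ∃ S : Set V, a ∈ S ∧ b ∉ S ∧ (G.cutEdges S).ncard ≤ j := by
  classical
  set S : Set V := {z | Nonempty (G.AWalk (G.resP F dir) a z)} with hS
  have haS : a ∈ S := ⟨AWalk.nil a⟩
  have hbS : b ∉ S := hnr
  have hstep : ∀ z ∈ S, ∀ (e : G.Edge) (bb : Bool), G.resP F dir e bb →
      G.tlB e bb = z → G.hdB e bb ∈ S := by
    intro z hz e bb hP ht
    exact residual_step hz hP ht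
  refine ⟨S, haS, hbS, ?_⟩
  have hsub : G.cutEdges S ⊆
      ↑(F.filter fun e => G.tlB e (dir e) ∈ S ∧ G.hdB e (dir e) ∉ S) := by
    intro e he
    obtain ⟨⟨x, hxe, hxS⟩, ⟨y, hye, hyS⟩⟩ := he
    rw [mem_ends_iff_tlB_or_hdB (e := e) (x := x) true] at hxe
    rw [mem_ends_iff_tlB_or_hdB (e := e) (x := y) true] at hye
    have t1 : G.tlB e false = G.hdB e true := tlB_not G e true
    have t2 : G.hdB e false = G.tlB e true := hdB_not G e true
    have hexb : ∃ bb : Bool, G.tlB e bb ∈ S ∧ G.hdB e bb ∉ S := by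
      rcases hxe with hx1 | hx1 <;> rcases hye with hy1 | hy1
      · exact absurd (by rw [hy1, ← hx1]; exact hxS) hyS
      · exact ⟨true, hx1 ▸ hxS, hy1 ▸ hyS⟩
      · refine ⟨false, ?_, ?_⟩
        · rw [t1, ← hx1]; exact hxS
        · rw [t2, ← hy1]; exact hyS
      · exact absurd (by rw [hy1, ← hx1]; exact hxS) hyS
    obtain ⟨bb, h1, h2⟩ := hexb
    by_cases hres : G.resP F dir e bb
    · exact absurd (hstep _ h1 e bb hres rfl) h2
    · simp only [resP, not_forall] at hres
      obtain ⟨heF, hbb⟩ := hres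
      have hbd : bb = dir e := by
        cases bb <;> cases hde : dir e <;> simp_all
      subst hbd
      simp only [Finset.coe_filter, Set.mem_setOf_eq]
      exact ⟨heF, h1, h2⟩
  have hin : (F.filter fun e => G.hdB e (dir e) ∈ S ∧ G.tlB e (dir e) ∉ S) = ∅ := by
    rw [Finset.filter_eq_empty_iff]
    rintro e heF ⟨h1, h2⟩
    have hr : G.resP F dir e (!(dir e)) := fun _ => rfl
    have := hstep _ h1 e (!(dir e)) hr (tlB_not G e (dir e))
    rw [hdB_not] at this
    exact h2 this
  have hcc := cross_card F dir S hf haS hbS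
  rw [hin] at hcc
  simp only [Finset.card_empty, Nat.cast_zero, add_zero] at hcc
  have := Set.ncard_le_ncard hsub (Finset.finite_toSet _)
  rw [Set.ncard_coe_finset] at this
  omega

/-! ### Augmentation -/

lemma countP_split (l : List α) (p q : α → Bool) :
    l.countP p = (l.filter q).countP p + (l.filter fun a => !(q a)).countP p := by
  induction l with
  | nil => simp
  | cons x l ih =>
    by_cases hq : q x = true <;> by_cases hp : p x = true <;>
      simp [List.countP_cons, List.filter_cons, hq, hp, ih] <;> omega

lemma card_filter_toFinset {α : Type*} [DecidableEq α] (l : List α) (hnd : l.Nodup)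
    (p : α → Prop) [DecidablePred p] :
    (l.toFinset.filter p).card = l.countP (fun x => decide (p x)) := by
  have h1 : l.toFinset.filter p = (l.filter (fun x => decide (p x))).toFinset := by
    ext x
    simp [List.mem_filter]
  rw [h1, List.card_toFinset, List.Nodup.dedup (hnd.filter _),
    List.countP_eq_length_filter]

lemma augment {a b : V} {j : ℕ} {F : Finset G.Edge} {dir : G.Edge → Bool}
    (hf : G.IsFlow a b F dir (j : ℤ)) (hab : a ≠ b)
    (R : G.AWalk (G.resP F dir) a b) (hnd : R.supportA.Nodup) :
    ∃ (F' : Finset G.Edge) (dir' : G.Edge → Bool),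
      G.IsFlow a b F' dir' ((j : ℤ) + 1) := by
  classical
  have hednd : (R.arcs.map Prod.fst).Nodup := AWalk.edges_nodup_of_supportA_nodup R hnd
  set freeArcs : List (G.Edge × Bool) := R.arcs.filter (fun ar => decide (ar.1 ∉ F))
    with hfreeArcs
  set revArcs : List (G.Edge × Bool) := R.arcs.filter (fun ar => !(decide (ar.1 ∉ F)))
    with hrevArcs
  set Ffree : Finset G.Edge := (freeArcs.map Prod.fst).toFinset with hFfree
  set Frev : Finset G.Edge := (revArcs.map Prod.fst).toFinset with hFrev
  have hmemfree : ∀ ar ∈ freeArcs, ar ∈ R.arcs ∧ ar.1 ∉ F := by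
    intro ar har
    have h := List.mem_filter.mp har
    exact ⟨h.1, by simpa using h.2⟩
  have hmemrev : ∀ ar ∈ revArcs, ar ∈ R.arcs ∧ ar.1 ∈ F := by
    intro ar har
    have h := List.mem_filter.mp har
    exact ⟨h.1, by simpa using h.2⟩
  have hFfreeNotF : ∀ e ∈ Ffree, e ∉ F := by
    intro e he
    simp only [hFfree, List.mem_toFinset, List.mem_map] at he
    obtain ⟨ar, har, rfl⟩ := he
    exact (hmemfree ar har).2
  have hFrevF : Frev ⊆ F := by
    intro e he
    simp only [hFrev, List.mem_toFinset, List.mem_map] at he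
    obtain ⟨ar, har, rfl⟩ := he
    exact (hmemrev ar har).2
  set dir' : G.Edge → Bool := fun e =>
    if e ∈ Ffree then decide ((e, true) ∈ R.arcs) else dir e with hdir'
  set F' : Finset G.Edge := (F \ Frev) ∪ Ffree with hF'
  have hinj := List.inj_on_of_nodup_map hednd
  have hdir'_free : ∀ ar ∈ R.arcs, ar.1 ∉ F → dir' ar.1 = ar.2 := by
    intro ar har hnF
    have hmem : ar.1 ∈ Ffree := by
      simp only [hFfree, List.mem_toFinset, List.mem_map]
      refine ⟨ar, List.mem_filter.mpr ⟨har, by simpa using hnF⟩, rfl⟩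
    simp only [hdir', if_pos hmem]
    rcases hb2 : ar.2 with _ | _
    · simp only [decide_eq_false_iff_not]
      intro hmem2
      have heq : (ar.1, true) = ar := hinj hmem2 har rfl
      rw [← heq] at hb2
      simp at hb2
    · simp only [decide_eq_true_eq]
      rw [← hb2]
      exact har
  have hdir'_F : ∀ e ∈ F, dir' e = dir e := by
    intro e he
    simp only [hdir', if_neg (fun h => hFfreeNotF e h he)]
  have hrev_dir : ∀ ar ∈ R.arcs, ar.1 ∈ F → ar.2 = !(dir ar.1) := by
    intro ar har hF
    exact AWalk.arcs_prop R ar har hF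
  refine ⟨F', dir', ?_⟩
  have hkey : ∀ v, G.dZ F' dir' v
      = G.dZ F dir v + (if v = a then 1 else 0) - (if v = b then 1 else 0) := by
    intro v
    have hdisj : Disjoint (F \ Frev) Ffree := by
      rw [Finset.disjoint_right]
      intro e he
      simp only [Finset.mem_sdiff, not_and]
      intro hF
      exact absurd hF (hFfreeNotF e he)
    have hAout : (F'.filter fun e => G.tlB e (dir' e) = v).card
        = ((F \ Frev).filter fun e => G.tlB e (dir' e) = v).card
          + (Ffree.filter fun e => G.tlB e (dir' e) = v).card := by
      rw [hF', Finset.filter_union, Finset.card_union_of_disjoint]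
      exact Finset.disjoint_filter_filter hdisj
    have hAin : (F'.filter fun e => G.hdB e (dir' e) = v).card
        = ((F \ Frev).filter fun e => G.hdB e (dir' e) = v).card
          + (Ffree.filter fun e => G.hdB e (dir' e) = v).card := by
      rw [hF', Finset.filter_union, Finset.card_union_of_disjoint]
      exact Finset.disjoint_filter_filter hdisj
    have hBout : ((F \ Frev).filter fun e => G.tlB e (dir' e) = v).card
        = ((F \ Frev).filter fun e => G.tlB e (dir e) = v).card := by
      refine congrArg _ (Finset.filter_congr fun e he => ?_)
      rw [hdir'_F e (Finset.mem_sdiff.mp he).1]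
    have hBin : ((F \ Frev).filter fun e => G.hdB e (dir' e) = v).card
        = ((F \ Frev).filter fun e => G.hdB e (dir e) = v).card := by
      refine congrArg _ (Finset.filter_congr fun e he => ?_)
      rw [hdir'_F e (Finset.mem_sdiff.mp he).1]
    have hCout : (F.filter fun e => G.tlB e (dir e) = v).card
        = (Frev.filter fun e => G.tlB e (dir e) = v).card
          + ((F \ Frev).filter fun e => G.tlB e (dir e) = v).card := by
      rw [← Finset.card_union_of_disjoint
        (Finset.disjoint_filter_filter Finset.disjoint_sdiff),
        ← Finset.filter_union, Finset.union_sdiff_of_subset hFrevF]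
    have hCin : (F.filter fun e => G.hdB e (dir e) = v).card
        = (Frev.filter fun e => G.hdB e (dir e) = v).card
          + ((F \ Frev).filter fun e => G.hdB e (dir e) = v).card := by
      rw [← Finset.card_union_of_disjoint
        (Finset.disjoint_filter_filter Finset.disjoint_sdiff),
        ← Finset.filter_union, Finset.union_sdiff_of_subset hFrevF]
    have hfreend : (freeArcs.map Prod.fst).Nodup :=
      ((List.filter_sublist).map Prod.fst).nodup hednd
    have hrevnd : (revArcs.map Prod.fst).Nodup :=
      ((List.filter_sublist).map Prod.fst).nodup hednd
    have hDout : (Ffree.filter fun e => G.tlB e (dir' e) = v).card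
        = freeArcs.countP (fun ar => decide (G.tlB ar.1 ar.2 = v)) := by
      rw [hFfree, card_filter_toFinset _ hfreend, List.countP_map]
      refine List.countP_congr fun ar har => ?_
      have h := hmemfree ar har
      simp only [Function.comp]
      rw [hdir'_free ar h.1 h.2]
    have hDin : (Ffree.filter fun e => G.hdB e (dir' e) = v).card
        = freeArcs.countP (fun ar => decide (G.hdB ar.1 ar.2 = v)) := by
      rw [hFfree, card_filter_toFinset _ hfreend, List.countP_map]
      refine List.countP_congr fun ar har => ?_
      have h := hmemfree ar har
      simp only [Function.comp]
      rw [hdir'_free ar h.1 h.2]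
    have hEout : (Frev.filter fun e => G.tlB e (dir e) = v).card
        = revArcs.countP (fun ar => decide (G.hdB ar.1 ar.2 = v)) := by
      rw [hFrev, card_filter_toFinset _ hrevnd, List.countP_map]
      refine List.countP_congr fun ar har => ?_
      have h := hmemrev ar har
      have h4 : dir ar.1 = !ar.2 := by rw [hrev_dir ar h.1 h.2]; simp
      simp only [Function.comp]
      rw [h4, tlB_not]
    have hEin : (Frev.filter fun e => G.hdB e (dir e) = v).card
        = revArcs.countP (fun ar => decide (G.tlB ar.1 ar.2 = v)) := by
      rw [hFrev, card_filter_toFinset _ hrevnd, List.countP_map]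
      refine List.countP_congr fun ar har => ?_
      have h := hmemrev ar har
      have h4 : dir ar.1 = !ar.2 := by rw [hrev_dir ar h.1 h.2]; simp
      simp only [Function.comp]
      rw [h4, hdB_not]
    have hs1 : AWalk.scount v R
        = freeArcs.countP (fun ar => decide (G.tlB ar.1 ar.2 = v))
          + revArcs.countP (fun ar => decide (G.tlB ar.1 ar.2 = v)) := by
      rw [AWalk.scount, countP_split R.arcs _ (fun ar => decide (ar.1 ∉ F))]
    have hs2 : AWalk.dcount v R
        = freeArcs.countP (fun ar => decide (G.hdB ar.1 ar.2 = v))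
          + revArcs.countP (fun ar => decide (G.hdB ar.1 ar.2 = v)) := by
      rw [AWalk.dcount, countP_split R.arcs _ (fun ar => decide (ar.1 ∉ F))]
    have hck := AWalk.count_key v R
    simp only [dZ, outC, inC]
    rw [hAout, hAin, hBout, hBin, hDout, hDin]
    rw [hEout] at hCout
    rw [hEin] at hCin
    rw [hs1, hs2] at hck
    push_cast
    split_ifs at hck ⊢ <;> omega
  refine ⟨fun v hva hvb => ?_, ?_, ?_⟩
  · rw [hkey v, hf.1 v hva hvb, if_neg hva, if_neg hvb]
    ring
  · rw [hkey a, hf.2.1, if_pos rfl, if_neg hab]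
    ring
  · rw [hkey b, hf.2.2, if_neg (fun h => hab h.symm), if_pos rfl]
    push_cast
    ring

/-! ### Extracting trails from a flow -/

lemma card_filter_erase {α : Type*} [DecidableEq α] (F : Finset α) (e : α) (he : e ∈ F)
    (p : α → Prop) [DecidablePred p] :
    ((F.erase e).filter p).card + (if p e then 1 else 0) = (F.filter p).card := by
  by_cases hp : p e
  · rw [if_pos hp, Finset.filter_erase, Finset.card_erase_of_mem (by simp [he, hp])]
    have : e ∈ F.filter p := by simp [he, hp]
    have hpos : 0 < (F.filter p).card := Finset.card_pos.mpr ⟨e, this⟩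
    omega
  · rw [if_neg hp, Finset.filter_erase, Finset.erase_eq_of_notMem (by simp [hp]),
      add_zero]

lemma extract_walk {b : V} : ∀ (n : ℕ) (F : Finset G.Edge) (dir : G.Edge → Bool) (z : V),
    F.card ≤ n → z ≠ b →
    (∀ v, v ≠ b → G.inC F dir v ≤ G.outC F dir v) →
    G.inC F dir z < G.outC F dir z →
    ∃ p : G.AWalk (fun e bb => e ∈ F ∧ bb = dir e) z b, (p.arcs.map Prod.fst).Nodup := by
  intro n
  induction n with
  | zero =>
    intro F dir z hcard hzb hinv hz
    have : G.outC F dir z ≤ F.card := Finset.card_filter_le _ _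
    omega
  | succ n ih =>
    intro F dir z hcard hzb hinv hz
    have hpos : 0 < G.outC F dir z := by omega
    rw [outC, Finset.card_pos] at hpos
    obtain ⟨e, he⟩ := hpos
    rw [Finset.mem_filter] at he
    obtain ⟨heF, het⟩ := he
    set w : V := G.hdB e (dir e) with hw
    have hzw : z ≠ w := by
      rw [← het, hw]
      exact tlB_ne_hdB G e (dir e)
    by_cases hwb : w = b
    · refine ⟨AWalk.cons e (dir e) ⟨heF, rfl⟩ het (hw ▸ hwb.symm ▸ rfl) (AWalk.nil b), ?_⟩
      simp [AWalk.arcs]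
    · -- recurse on F.erase e from w
      have hcard2 : (F.erase e).card ≤ n := by
        rw [Finset.card_erase_of_mem heF]
        omega
      have hout : ∀ v, G.outC (F.erase e) dir v + (if G.tlB e (dir e) = v then 1 else 0)
          = G.outC F dir v := fun v => card_filter_erase F e heF _
      have hin : ∀ v, G.inC (F.erase e) dir v + (if G.hdB e (dir e) = v then 1 else 0)
          = G.inC F dir v := fun v => card_filter_erase F e heF _
      have hinv2 : ∀ v, v ≠ b → G.inC (F.erase e) dir v ≤ G.outC (F.erase e) dir v := by
        intro v hvb
        have h1 := hout v
        have h2 := hin v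
        have h3 := hinv v hvb
        by_cases hvz : v = z
        · subst hvz
          rw [if_pos het] at h1
          by_cases hvw : v = w
          · rw [if_pos (by rw [hvw])] at h2
            omega
          · rw [if_neg (fun h => hvw (by rw [← h, hw]))] at h2
            omega
        · rw [if_neg (fun h => hvz (by rw [← het, h]))] at h1
          by_cases hvw : v = w
          · rw [if_pos (by rw [hvw])] at h2
            omega
          · rw [if_neg (fun h => hvw (by rw [← h, hw]))] at h2
            omega
      have hstrict : G.inC (F.erase e) dir w < G.outC (F.erase e) dir w := by
        have h1 := hout w
        have h2 := hin w
        have h3 := hinv w hwb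
        rw [if_neg (fun h => hzw (by rw [← het, h]))] at h1
        rw [if_pos hw.symm] at h2
        omega
      obtain ⟨p', hp'⟩ := ih (F.erase e) dir w hcard2 hwb hinv2 hstrict
      have hmono : ∀ (e' : G.Edge) (bb : Bool), (e' ∈ F.erase e ∧ bb = dir e') →
          (e' ∈ F ∧ bb = dir e') := fun e' bb h => ⟨Finset.mem_of_mem_erase h.1, h.2⟩
      refine ⟨AWalk.cons e (dir e) ⟨heF, rfl⟩ het rfl (p'.mapP hmono), ?_⟩
      simp only [AWalk.arcs, List.map_cons, List.nodup_cons, AWalk.mapP_arcs]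
      refine ⟨?_, hp'⟩
      intro hmem
      simp only [List.mem_map] at hmem
      obtain ⟨ar, har, hare⟩ := hmem
      have := AWalk.arcs_prop p' ar har
      rw [hare] at this
      exact Finset.notMem_erase e F this.1

lemma trails_of_flow {a b : V} (hab : a ≠ b) :
    ∀ (k : ℕ) (F : Finset G.Edge) (dir : G.Edge → Bool),
    G.IsFlow a b F dir (k : ℤ) →
    ∃ P : Fin k → G.Walk a b, (∀ i, (P i).edges.Nodup) ∧
      (∀ i, ∀ e ∈ (P i).edges, e ∈ F) ∧
      (∀ i j', i ≠ j' → ∀ e, e ∈ (P i).edges → e ∉ (P j').edges) := by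
  intro k
  induction k with
  | zero =>
    intro F dir hf
    exact ⟨fun i => i.elim0, fun i => i.elim0, fun i => i.elim0, fun i => i.elim0⟩
  | succ k ih =>
    intro F dir hf
    have hinv : ∀ v, v ≠ b → G.inC F dir v ≤ G.outC F dir v := by
      intro v hvb
      by_cases hva : v = a
      · subst hva
        have := hf.2.1
        simp only [dZ] at this
        omega
      · have := hf.1 v hva hvb
        simp only [dZ] at this
        omega
    have hza : G.inC F dir a < G.outC F dir a := by
      have := hf.2.1
      simp only [dZ] at this
      push_cast at this
      omega
    obtain ⟨p, hpnd⟩ := extract_walk F.card F dir a le_rfl hab hinv hza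
    have harcF : ∀ ar ∈ p.arcs, ar.1 ∈ F ∧ ar.2 = dir ar.1 := fun ar har =>
      AWalk.arcs_prop p ar har
    set EP : Finset G.Edge := (p.arcs.map Prod.fst).toFinset with hEP
    have hEPF : EP ⊆ F := by
      intro e he
      simp only [hEP, List.mem_toFinset, List.mem_map] at he
      obtain ⟨ar, har, rfl⟩ := he
      exact (harcF ar har).1
    set F₂ : Finset G.Edge := F \ EP with hF₂
    have hsplit_out : ∀ v, (F.filter fun e => G.tlB e (dir e) = v).card
        = (EP.filter fun e => G.tlB e (dir e) = v).card
          + (F₂.filter fun e => G.tlB e (dir e) = v).card := by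
      intro v
      rw [← Finset.card_union_of_disjoint
        (Finset.disjoint_filter_filter Finset.disjoint_sdiff),
        ← Finset.filter_union, Finset.union_sdiff_of_subset hEPF]
    have hsplit_in : ∀ v, (F.filter fun e => G.hdB e (dir e) = v).card
        = (EP.filter fun e => G.hdB e (dir e) = v).card
          + (F₂.filter fun e => G.hdB e (dir e) = v).card := by
      intro v
      rw [← Finset.card_union_of_disjoint
        (Finset.disjoint_filter_filter Finset.disjoint_sdiff),
        ← Finset.filter_union, Finset.union_sdiff_of_subset hEPF]
    have hEPout : ∀ v, (EP.filter fun e => G.tlB e (dir e) = v).card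
        = AWalk.scount v p := by
      intro v
      rw [hEP, card_filter_toFinset _ hpnd, List.countP_map, AWalk.scount]
      refine List.countP_congr fun ar har => ?_
      simp only [Function.comp]
      rw [(harcF ar har).2]
    have hEPin : ∀ v, (EP.filter fun e => G.hdB e (dir e) = v).card
        = AWalk.dcount v p := by
      intro v
      rw [hEP, card_filter_toFinset _ hpnd, List.countP_map, AWalk.dcount]
      refine List.countP_congr fun ar har => ?_
      simp only [Function.comp]
      rw [(harcF ar har).2]
    have hf₂ : G.IsFlow a b F₂ dir (k : ℤ) := by
      have hkey : ∀ v, G.dZ F₂ dir v = G.dZ F dir v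
          - (if v = a then 1 else 0) + (if v = b then 1 else 0) := by
        intro v
        have h1 := hsplit_out v
        have h2 := hsplit_in v
        have h3 := hEPout v
        have h4 := hEPin v
        have h5 := AWalk.count_key v p
        simp only [dZ, outC, inC] at *
        push_cast
        split_ifs at h5 ⊢ <;> omega
      refine ⟨fun v hva hvb => ?_, ?_, ?_⟩
      · rw [hkey v, hf.1 v hva hvb, if_neg hva, if_neg hvb]
        ring
      · rw [hkey a, hf.2.1, if_pos rfl, if_neg hab]
        push_cast
        ring
      · rw [hkey b, hf.2.2, if_neg (fun h => hab h.symm), if_pos rfl]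
        push_cast
        ring
    obtain ⟨P', h1, h2, h3⟩ := ih F₂ dir hf₂
    have hPedges : p.toWalk.edges = p.arcs.map Prod.fst := AWalk.toWalk_edges p
    have hPin : ∀ e ∈ p.toWalk.edges, e ∈ EP := by
      intro e he
      rw [hPedges] at he
      simp [hEP, he]
    refine ⟨Fin.cons p.toWalk P', ?_, ?_, ?_⟩
    · intro i
      rcases Fin.eq_zero_or_eq_succ i with rfl | ⟨i'', rfl⟩
      · rw [Fin.cons_zero, hPedges]
        exact hpnd
      · rw [Fin.cons_succ]
        exact h1 i''
    · intro i
      rcases Fin.eq_zero_or_eq_succ i with rfl | ⟨i'', rfl⟩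
      · rw [Fin.cons_zero]
        exact fun e he => hEPF (hPin e he)
      · rw [Fin.cons_succ]
        intro e he
        exact (Finset.mem_sdiff.mp (h2 i'' e he)).1
    · intro i j' hij' e he hmem
      rcases Fin.eq_zero_or_eq_succ i with rfl | ⟨i'', rfl⟩ <;>
        rcases Fin.eq_zero_or_eq_succ j' with rfl | ⟨j'', rfl⟩
      · exact hij' rfl
      · rw [Fin.cons_zero] at he
        rw [Fin.cons_succ] at hmem
        exact (Finset.mem_sdiff.mp (h2 j'' e hmem)).2 (hPin e he)
      · rw [Fin.cons_succ] at he
        rw [Fin.cons_zero] at hmem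
        exact (Finset.mem_sdiff.mp (h2 i'' e he)).2 (hPin e hmem)
      · rw [Fin.cons_succ] at he hmem
        exact h3 i'' j'' (fun h => hij' (congrArg Fin.succ h)) e he hmem

/-! ### Menger's theorem -/

theorem menger_hard {a b : V} (k : ℕ)
    (hcut : ∀ S : Set V, a ∈ S → b ∉ S → k ≤ (G.cutEdges S).ncard) :
    G.HasEDP a b k := by
  by_cases hab : a = b
  · subst hab
    exact ⟨fun _ => Walk.nil a, fun _ => by simp [Walk.edges], fun i j h e he =>
      by simp [Walk.edges] at he⟩
  have hflow : ∀ j : ℕ, j ≤ k → ∃ F dir, G.IsFlow a b F dir (j : ℤ) := by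
    intro j
    induction j with
    | zero =>
      intro _
      refine ⟨∅, fun _ => true, ?_, ?_, ?_⟩ <;>
        simp [dZ, outC, inC]
    | succ j ih =>
      intro hjk
      obtain ⟨F, dir, hf⟩ := ih (le_trans (Nat.le_succ j) hjk)
      by_cases hres : Nonempty (G.AWalk (G.resP F dir) a b)
      · obtain ⟨R⟩ := hres
        obtain ⟨R', hnd⟩ := AWalk.exists_nodup_supportA R
        obtain ⟨F', dir', hf'⟩ := augment hf hab R' hnd
        refine ⟨F', dir', ?_⟩
        have hcast : ((j : ℤ) + 1) = ((j + 1 : ℕ) : ℤ) := by push_cast; ring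
        rw [← hcast]
        exact hf'
      · obtain ⟨S, haS, hbS, hle⟩ := no_residual_cut F dir hf hres
        have := hcut S haS hbS
        omega
  obtain ⟨F, dir, hf⟩ := hflow k le_rfl
  obtain ⟨P, h1, _, h3⟩ := trails_of_flow hab k F dir hf
  exact ⟨P, h1, h3⟩

theorem menger_easy {a b : V} {k : ℕ} (h : G.HasEDP a b k) {S : Set V}
    (ha : a ∈ S) (hb : b ∉ S) : k ≤ (G.cutEdges S).ncard := by
  obtain ⟨P, hnd, hdisj⟩ := h
  have hcross : ∀ i : Fin k, ∃ e ∈ (P i).edges, e ∈ G.cutEdges S := fun i =>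
    exists_cut_edge_of_walk (P i) ha hb
  choose f hf1 hf2 using hcross
  have : Finite ↥(G.cutEdges S) := by
    have : Finite G.Edge := G.edge_finite
    exact Subtype.finite
  have hinj : Function.Injective (fun i => (⟨f i, hf2 i⟩ : ↥(G.cutEdges S))) := by
    intro i j hij
    simp only [Subtype.mk_eq_mk] at hij
    by_contra hne
    exact hdisj i j hne (f i) (hf1 i) (hij ▸ hf1 j)
  calc k = Nat.card (Fin k) := by simp
    _ ≤ Nat.card ↥(G.cutEdges S) := Nat.card_le_card_of_injective _ hinj
    _ = (G.cutEdges S).ncard := (Nat.card_coe_set_eq _)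

/-! ### Cycle expansion: projections and edge-end computations -/

lemma sym2RestrictP_eq_pair {α : Type} (P : α → Prop) (z : Sym2 α) (h : ∀ x ∈ z, P x)
    {x y : α} (hz : z = s(x, y)) :
    ∃ (hx : P x) (hy : P y), sym2RestrictP P z h = s(⟨x, hx⟩, ⟨y, hy⟩) := by
  subst hz
  refine ⟨h x (by simp), h y (by simp), ?_⟩
  unfold sym2RestrictP
  rw [Sym2.map_pair_eq, dif_pos (h x (by simp)), dif_pos (h y (by simp))]

lemma cutEdges_pair {e : G.Edge} {p q : V} (he : G.ends e = s(p, q)) (S : Set V) :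
    e ∈ G.cutEdges S ↔ ((p ∈ S ∧ q ∉ S) ∨ (q ∈ S ∧ p ∉ S)) := by
  constructor
  · rintro ⟨⟨x, hx, hxS⟩, ⟨y, hy, hyS⟩⟩
    rw [he, Sym2.mem_iff] at hx hy
    rcases hx with rfl | rfl <;> rcases hy with rfl | rfl <;> tauto
  · rintro (⟨h1, h2⟩ | ⟨h1, h2⟩)
    · exact ⟨⟨p, by rw [he]; simp, h1⟩, ⟨q, by rw [he]; simp, h2⟩⟩
    · exact ⟨⟨q, by rw [he]; simp, h1⟩, ⟨p, by rw [he]; simp, h2⟩⟩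

lemma cutEdges_compl (S : Set V) : G.cutEdges Sᶜ = G.cutEdges S := by
  ext e
  unfold cutEdges
  simp only [Set.mem_setOf_eq, Set.mem_compl_iff, not_not]
  tauto

lemma three_le_ncard_of_three_mem {α : Type} {s : Set α} (hs : s.Finite) {a b c : α}
    (ha : a ∈ s) (hb : b ∈ s) (hc : c ∈ s) (hab : a ≠ b) (hac : a ≠ c) (hbc : b ≠ c) :
    3 ≤ s.ncard := by
  have hsub : ({a, b, c} : Set α) ⊆ s := by
    intro z hz
    rcases hz with rfl | rfl | rfl
    exacts [ha, hb, hc]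
  have h3 : ({a, b, c} : Set α).ncard = 3 := by
    rw [Set.ncard_insert_of_notMem (by simp [hab, hac]) (Set.Finite.insert _ (Set.finite_singleton _)),
      Set.ncard_insert_of_notMem (by simp [hbc]) (Set.finite_singleton _),
      Set.ncard_singleton]
  rw [← h3]
  exact Set.ncard_le_ncard hsub hs

lemma ncard_triple_le {α : Type} (a b c : α) : ({a, b, c} : Set α).ncard ≤ 3 := by
  refine le_trans (Set.ncard_insert_le _ _) ?_
  have := Set.ncard_insert_le b ({c} : Set α)
  rw [Set.ncard_singleton] at this
  omega

lemma exists_rise {d' : ℕ} (hd2 : 2 ≤ d') (χ : Fin d' → Prop) {ip im : Fin d'}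
    (hip : χ ip) (him : ¬ χ im) :
    ∃ j : Fin d', χ j ∧ ¬ χ ⟨(j.1 + 1) % d', Nat.mod_lt _ (by omega)⟩ := by
  by_contra hcon
  push_neg at hcon
  have hstep : ∀ t : ℕ, χ ⟨(ip.1 + t) % d', Nat.mod_lt _ (by omega)⟩ := by
    intro t
    induction t with
    | zero =>
      have : (ip.1 + 0) % d' = ip.1 := by
        rw [Nat.add_zero, Nat.mod_eq_of_lt ip.2]
      rw [show (⟨(ip.1 + 0) % d', Nat.mod_lt _ (by omega)⟩ : Fin d') = ip from Fin.ext this]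
      exact hip
    | succ t iht =>
      have hth := hcon _ iht
      have harith : ((ip.1 + t) % d' + 1) % d' = (ip.1 + (t + 1)) % d' := by
        conv_rhs => rw [show ip.1 + (t + 1) = (ip.1 + t) + 1 by ring,
          Nat.add_mod (ip.1 + t) 1 d', Nat.mod_eq_of_lt (show 1 < d' by omega)]
      rw [show (⟨(ip.1 + (t+1)) % d', Nat.mod_lt _ (by omega)⟩ : Fin d')
        = ⟨((ip.1 + t) % d' + 1) % d', Nat.mod_lt _ (by omega)⟩ from Fin.ext harith.symm]
      exact hth
  have hfin := hstep (d' + im.1 - ip.1)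
  have harith2 : (ip.1 + (d' + im.1 - ip.1)) % d' = im.1 := by
    have h1 : ip.1 + (d' + im.1 - ip.1) = d' + im.1 := by
      have := ip.2
      omega
    rw [h1, Nat.add_mod_left, Nat.mod_eq_of_lt im.2]
  rw [show (⟨(ip.1 + (d' + im.1 - ip.1)) % d', Nat.mod_lt _ (by omega)⟩ : Fin d') = im
    from Fin.ext harith2] at hfin
  exact him hfin

lemma exists_fall {d' : ℕ} (hd2 : 2 ≤ d') (χ : Fin d' → Prop) {ip im : Fin d'}
    (hip : χ ip) (him : ¬ χ im) :
    ∃ j : Fin d', ¬ χ j ∧ χ ⟨(j.1 + 1) % d', Nat.mod_lt _ (by omega)⟩ := by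
  obtain ⟨j, hj1, hj2⟩ := exists_rise hd2 (fun j => ¬ χ j) him (not_not.mpr hip)
  exact ⟨j, hj1, not_not.mp hj2⟩


section CycleExpand

variable (G : Multigraph V) (u : V) {d d' : ℕ} (h2 : 2 ≤ d') (hdd : d' ≤ d)
  (ι : Fin d ≃ {e : G.Edge // u ∈ G.ends e})

/-- Projection of the expanded vertex set back to the original one. -/
def piCE : ({x : V // x ≠ u} ⊕ Fin d') → V := Sum.elim Subtype.val (fun _ => u)

lemma ends_inl_CE (e : {e : G.Edge // u ∉ G.ends e}) :
    ∃ (x y : V) (hx : x ≠ u) (hy : y ≠ u), G.ends e.1 = s(x, y) ∧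
      (G.cycleExpand u h2 hdd ι).ends (Sum.inl e) =
        s(Sum.inl ⟨x, hx⟩, Sum.inl ⟨y, hy⟩) := by
  obtain ⟨x, y, hxy⟩ := exists_pair_eq (G.ends e.1)
  obtain ⟨hx, hy, hres⟩ := sym2RestrictP_eq_pair (· ≠ u) (G.ends e.1)
    (fun z hz hze => e.2 (hze ▸ hz)) hxy
  refine ⟨x, y, hx, hy, hxy, ?_⟩
  show (sym2RestrictP (· ≠ u) (G.ends e.1) _).map Sum.inl = _
  rw [hres, Sym2.map_pair_eq]

lemma ends_inr_inl_CE (i : Fin d) :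
    (G.cycleExpand u h2 hdd ι).ends (Sum.inr (Sum.inl i)) =
      s(Sum.inr ⟨min i.1 (d' - 1), by omega⟩,
        Sum.inl ⟨Sym2.Mem.other (ι i).2, other_ne (ι i).2⟩) := rfl

lemma ends_inr_inr_CE (j : Fin d') :
    (G.cycleExpand u h2 hdd ι).ends (Sum.inr (Sum.inr j)) =
      s(Sum.inr j, Sum.inr ⟨(j.1 + 1) % d', Nat.mod_lt _ (by omega)⟩) := rfl

/-- Edge projection. -/
noncomputable def pfCE : (G.cycleExpand u h2 hdd ι).Edge → Option G.Edge := fun ε =>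
  match ε with
  | .inl e => some e.1
  | .inr (.inl i) => some (ι i).1
  | .inr (.inr _) => none

lemma pfCE_inj : ∀ (ε₁ ε₂ : (G.cycleExpand u h2 hdd ι).Edge) (e : G.Edge),
    pfCE G u h2 hdd ι ε₁ = some e → pfCE G u h2 hdd ι ε₂ = some e → ε₁ = ε₂ := by
  intro ε₁ ε₂ e he₁ he₂
  cases ε₁ with
  | inl e₁ =>
    cases ε₂ with
    | inl e₂ =>
      simp only [pfCE, Option.some_inj] at he₁ he₂
      exact congrArg Sum.inl (Subtype.ext (he₁.trans he₂.symm))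
    | inr ε₂' =>
      cases ε₂' with
      | inl i₂ =>
        simp only [pfCE, Option.some_inj] at he₁ he₂
        exact absurd ((he₂.trans he₁.symm) ▸ (ι i₂).2) e₁.2
      | inr j₂ => simp [pfCE] at he₂
  | inr ε₁' =>
    cases ε₁' with
    | inl i₁ =>
      cases ε₂ with
      | inl e₂ =>
        simp only [pfCE, Option.some_inj] at he₁ he₂
        exact absurd ((he₁.trans he₂.symm) ▸ (ι i₁).2) e₂.2
      | inr ε₂' =>
        cases ε₂' with
        | inl i₂ =>
          simp only [pfCE, Option.some_inj] at he₁ he₂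
          have h : ι i₁ = ι i₂ := Subtype.ext (he₁.trans he₂.symm)
          rw [ι.injective h]
        | inr j₂ => simp [pfCE] at he₂
    | inr j₁ => simp [pfCE] at he₁

lemma proj_ends_inl (e : {e : G.Edge // u ∉ G.ends e}) {w₁ w₂ : ({x : V // x ≠ u} ⊕ Fin d')}
    (he : (G.cycleExpand u h2 hdd ι).ends (Sum.inl e) = s(w₁, w₂)) :
    G.ends e.1 = s(piCE u w₁, piCE u w₂) := by
  obtain ⟨x, y, hx, hy, hxy, hends⟩ := ends_inl_CE G u h2 hdd ι e
  rw [hends] at he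
  rw [Sym2.eq_iff] at he
  rcases he with ⟨h1, h2⟩ | ⟨h1, h2⟩
  · rw [← h1, ← h2, hxy]; rfl
  · rw [← h1, ← h2, hxy, Sym2.eq_swap]; rfl

lemma proj_ends_inr_inl (i : Fin d) {w₁ w₂ : ({x : V // x ≠ u} ⊕ Fin d')}
    (he : (G.cycleExpand u h2 hdd ι).ends (Sum.inr (Sum.inl i)) = s(w₁, w₂)) :
    G.ends (ι i).1 = s(piCE u w₁, piCE u w₂) := by
  rw [ends_inr_inl_CE G u h2 hdd ι i] at he
  have hsp : s(u, Sym2.Mem.other (ι i).2) = G.ends (ι i).1 := Sym2.other_spec (ι i).2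
  rw [Sym2.eq_iff] at he
  rcases he with ⟨h1, h2⟩ | ⟨h1, h2⟩
  · rw [← h1, ← h2]
    exact hsp.symm
  · rw [← h1, ← h2, Sym2.eq_swap]
    exact hsp.symm

lemma proj_ends_inr_inr (j : Fin d') {w₁ w₂ : ({x : V // x ≠ u} ⊕ Fin d')}
    (he : (G.cycleExpand u h2 hdd ι).ends (Sum.inr (Sum.inr j)) = s(w₁, w₂)) :
    piCE u w₂ = piCE u w₁ := by
  rw [ends_inr_inr_CE G u h2 hdd ι j] at he
  rw [Sym2.eq_iff] at he
  rcases he with ⟨h1, h2⟩ | ⟨h1, h2⟩ <;> rw [← h1, ← h2] <;> rfl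

/-- Transport a walk along equalities of its endpoints. -/
def Walk.copy {G : Multigraph V} {x y x' y' : V} (p : G.Walk x y) (hx : x = x')
    (hy : y = y') : G.Walk x' y' := hx ▸ hy ▸ p

lemma Walk.copy_edges {G : Multigraph V} {x y x' y' : V} (p : G.Walk x y) (hx : x = x')
    (hy : y = y') : (p.copy hx hy).edges = p.edges := by
  subst hx; subst hy; rfl

/-- Project a walk of the expanded graph down to the original graph. -/
noncomputable def projWalk : ∀ {w₁ w₂ : ({x : V // x ≠ u} ⊕ Fin d')},
    (G.cycleExpand u h2 hdd ι).Walk w₁ w₂ → G.Walk (piCE u w₁) (piCE u w₂)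
  | _, _, .nil v => Walk.nil _
  | _, _, .cons (Sum.inl e) he p =>
      Walk.cons e.1 (proj_ends_inl G u h2 hdd ι e he) (projWalk p)
  | _, _, .cons (Sum.inr (Sum.inl i)) he p =>
      Walk.cons (ι i).1 (proj_ends_inr_inl G u h2 hdd ι i he) (projWalk p)
  | _, _, .cons (Sum.inr (Sum.inr j)) he p =>
      (projWalk p).copy (proj_ends_inr_inr G u h2 hdd ι j he) rfl

lemma projWalk_edges : ∀ {w₁ w₂ : ({x : V // x ≠ u} ⊕ Fin d')}
    (p : (G.cycleExpand u h2 hdd ι).Walk w₁ w₂),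
    (projWalk G u h2 hdd ι p).edges = p.edges.filterMap (pfCE G u h2 hdd ι)
  | _, _, .nil v => rfl
  | _, _, .cons (Sum.inl e) he p => by
      simp [projWalk, Walk.edges, projWalk_edges p, List.filterMap_cons, pfCE]
      rfl
  | _, _, .cons (Sum.inr (Sum.inl i)) he p => by
      simp [projWalk, Walk.edges, projWalk_edges p, List.filterMap_cons, pfCE]
      rfl
  | _, _, .cons (Sum.inr (Sum.inr j)) he p => by
      simp [projWalk, Walk.copy_edges, Walk.edges, projWalk_edges p,
        List.filterMap_cons, pfCE]
      rfl

lemma hasEDP_of_expand {w₁ w₂ : ({x : V // x ≠ u} ⊕ Fin d')} {k : ℕ}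
    (h : (G.cycleExpand u h2 hdd ι).HasEDP w₁ w₂ k) :
    G.HasEDP (piCE u w₁) (piCE u w₂) k := by
  obtain ⟨P, hnd, hdisj⟩ := h
  refine ⟨fun i => projWalk G u h2 hdd ι (P i), fun i => ?_, fun i j hij e hee₁ hee₂ => ?_⟩
  · rw [projWalk_edges]
    exact (hnd i).filterMap (fun ε₁ ε₂ e hh1 hh2 => pfCE_inj G u h2 hdd ι ε₁ ε₂ e hh1 hh2)
  · rw [projWalk_edges, List.mem_filterMap] at hee₁ hee₂
    obtain ⟨ε₁, hε₁, hpf₁⟩ := hee₁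
    obtain ⟨ε₂, hε₂, hpf₂⟩ := hee₂
    have : ε₁ = ε₂ := pfCE_inj G u h2 hdd ι ε₁ ε₂ e hpf₁ hpf₂
    exact hdisj i j hij ε₁ hε₁ (this ▸ hε₂)


/-- Lift an edge of `G` to an edge of the expansion. -/
noncomputable def liftE : G.Edge → (G.cycleExpand u h2 hdd ι).Edge := fun e =>
  if h : u ∈ G.ends e then Sum.inr (Sum.inl (ι.symm ⟨e, h⟩)) else Sum.inl ⟨e, h⟩

lemma liftE_inj : Function.Injective (liftE G u h2 hdd ι) := by
  intro e e' hee
  unfold liftE at hee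
  by_cases h : u ∈ G.ends e <;> by_cases h' : u ∈ G.ends e'
  · erw [dif_pos h, dif_pos h'] at hee
    injection hee with hee
    injection hee with hee
    exact congrArg Subtype.val (ι.symm.injective hee)
  · erw [dif_pos h, dif_neg h'] at hee
    exact nomatch hee
  · erw [dif_neg h, dif_pos h'] at hee
    exact nomatch hee
  · erw [dif_neg h, dif_neg h'] at hee
    injection hee with hee
    exact congrArg Subtype.val hee

lemma liftE_mem_cut {B : Set V} {e : G.Edge} (he : e ∈ G.cutEdges B) :
    liftE G u h2 hdd ι e ∈ (G.cycleExpand u h2 hdd ι).cutEdges (piCE u ⁻¹' B) := by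
  unfold liftE
  by_cases h : u ∈ G.ends e
  · erw [dif_pos h]
    set i : Fin d := ι.symm ⟨e, h⟩ with hi
    have hEi : ι i = ⟨e, h⟩ := ι.apply_symm_apply _
    have he1 : (ι i).1 = e := by rw [hEi]
    have hsp : s(u, Sym2.Mem.other (ι i).2) = G.ends (ι i).1 := Sym2.other_spec _
    rw [← he1] at he
    rw [cutEdges_pair hsp.symm] at he
    rw [cutEdges_pair (ends_inr_inl_CE G u h2 hdd ι i)]
    simp only [Set.mem_preimage]
    exact he
  · erw [dif_neg h]
    obtain ⟨x, y, hx, hy, hxy, hends⟩ := ends_inl_CE G u h2 hdd ι ⟨e, h⟩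
    rw [cutEdges_pair hxy] at he
    rw [cutEdges_pair hends]
    simp only [Set.mem_preimage]
    exact he

lemma cut_le_of_preimage (B : Set V) :
    (G.cutEdges B).ncard ≤
      ((G.cycleExpand u h2 hdd ι).cutEdges (piCE u ⁻¹' B)).ncard := by
  have hfin : Finite (G.cycleExpand u h2 hdd ι).Edge :=
    (G.cycleExpand u h2 hdd ι).edge_finite
  have : Finite ↥((G.cycleExpand u h2 hdd ι).cutEdges (piCE u ⁻¹' B)) := Subtype.finite
  have hinj : Function.Injective
      (fun e : ↥(G.cutEdges B) =>
        (⟨liftE G u h2 hdd ι e.1, liftE_mem_cut G u h2 hdd ι e.2⟩ :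
          ↥((G.cycleExpand u h2 hdd ι).cutEdges (piCE u ⁻¹' B)))) := by
    intro e e' hee
    simp only [Subtype.mk_eq_mk] at hee
    exact Subtype.ext (liftE_inj G u h2 hdd ι hee)
  calc (G.cutEdges B).ncard = Nat.card ↥(G.cutEdges B) := (Nat.card_coe_set_eq _).symm
    _ ≤ Nat.card ↥((G.cycleExpand u h2 hdd ι).cutEdges (piCE u ⁻¹' B)) :=
        Nat.card_le_card_of_injective _ hinj
    _ = _ := Nat.card_coe_set_eq _


lemma cut_at_cycle_vertex (i : Fin d') (hi : i.1 < d' - 1) :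
    ((G.cycleExpand u h2 hdd ι).cutEdges {Sum.inr i}).ncard ≤ 3 := by
  classical
  set E1 : (G.cycleExpand u h2 hdd ι).Edge := Sum.inr (Sum.inl ⟨i.1, by omega⟩) with hE1
  set E2 : (G.cycleExpand u h2 hdd ι).Edge := Sum.inr (Sum.inr i) with hE2
  set E3 : (G.cycleExpand u h2 hdd ι).Edge :=
    Sum.inr (Sum.inr (⟨(i.1 + d' - 1) % d', Nat.mod_lt _ (by omega)⟩ : Fin d')) with hE3
  have hsub : (G.cycleExpand u h2 hdd ι).cutEdges {Sum.inr i} ⊆ {E1, E2, E3} := by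
    intro ε hε
    cases ε with
    | inl e =>
      obtain ⟨x, y, hx, hy, hxy, hends⟩ := ends_inl_CE G u h2 hdd ι e
      rw [cutEdges_pair hends] at hε
      rcases hε with ⟨hε, -⟩ | ⟨hε, -⟩ <;> exact absurd hε (by simp)
    | inr ε' =>
      cases ε' with
      | inl i' =>
        rw [cutEdges_pair (ends_inr_inl_CE G u h2 hdd ι i')] at hε
        rcases hε with ⟨hε, -⟩ | ⟨hε, -⟩
        · rw [Set.mem_singleton_iff] at hε
          injection hε with hε
          have hval : min i'.1 (d' - 1) = i.1 := by
            rw [Fin.ext_iff] at hε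
            exact hε
          have hii : i'.1 = i.1 := by omega
          have : i' = (⟨i.1, by omega⟩ : Fin d) := Fin.ext hii
          rw [this]
          left
          rfl
        · exact absurd hε (by simp)
      | inr m =>
        rw [cutEdges_pair (ends_inr_inr_CE G u h2 hdd ι m)] at hε
        have hkey : (Sum.inr m : {x : V // x ≠ u} ⊕ Fin d') = Sum.inr i ∨
            (Sum.inr ⟨(m.1 + 1) % d', Nat.mod_lt _ (by omega)⟩ :
              {x : V // x ≠ u} ⊕ Fin d') = Sum.inr i := by
          rcases hε with ⟨hε, -⟩ | ⟨hε, -⟩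
          · left; exact hε
          · right; exact hε
        rcases hkey with hk | hk
        · injection hk with hk
          rw [hk]
          right; left
          rfl
        · injection hk with hk
          rw [Fin.ext_iff] at hk
          simp only at hk
          have hm : m.1 = (i.1 + d' - 1) % d' := by
            rcases Nat.lt_or_ge (m.1 + 1) d' with hlt | hge
            · rw [Nat.mod_eq_of_lt hlt] at hk
              have h1 : i.1 + d' - 1 = m.1 + d' := by omega
              rw [h1, Nat.add_mod_right, Nat.mod_eq_of_lt m.2]
            · have hmd : m.1 + 1 = d' := by have := m.2; omega
              rw [hmd, Nat.mod_self] at hk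
              have h1 : i.1 + d' - 1 = d' - 1 := by omega
              rw [h1, Nat.mod_eq_of_lt (by omega)]
              omega
          right; right
          erw [Set.mem_singleton_iff, hE3]
          congr 1
          congr 1
          exact Fin.ext hm
  refine le_trans (Set.ncard_le_ncard hsub ?_) (ncard_triple_le E1 E2 E3)
  exact Set.Finite.insert _ (Set.Finite.insert _ (Set.finite_singleton _))

lemma cut_ge_three (hG : G.ExactlyEdgeConnected 3) (hbi : G.Biconnected)
    {x y : ({x : V // x ≠ u} ⊕ Fin d')} (hxy : x ≠ y)
    (S' : Set ({x : V // x ≠ u} ⊕ Fin d')) (hx : x ∈ S') (hy : y ∉ S') :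
    3 ≤ ((G.cycleExpand u h2 hdd ι).cutEdges S').ncard := by
  classical
  have hfinE : Finite (G.cycleExpand u h2 hdd ι).Edge :=
    (G.cycleExpand u h2 hdd ι).edge_finite
  by_cases hsplit : (∃ j : Fin d', Sum.inr j ∈ S') ∧ (∃ j : Fin d', Sum.inr j ∉ S')
  · obtain ⟨⟨jp, hjp⟩, ⟨jm, hjm⟩⟩ := hsplit
    obtain ⟨j1, hj11, hj12⟩ := exists_rise h2 (fun j => Sum.inr j ∈ S') hjp hjm
    obtain ⟨j2, hj21, hj22⟩ := exists_fall h2 (fun j => Sum.inr j ∈ S') hjp hjm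
    have hj12' : j1 ≠ j2 := fun h => hj21 (h ▸ hj11)
    have hE1 : (Sum.inr (Sum.inr j1) : (G.cycleExpand u h2 hdd ι).Edge)
        ∈ (G.cycleExpand u h2 hdd ι).cutEdges S' := by
      erw [cutEdges_pair (ends_inr_inr_CE G u h2 hdd ι j1)]
      exact Or.inl ⟨hj11, hj12⟩
    have hE2 : (Sum.inr (Sum.inr j2) : (G.cycleExpand u h2 hdd ι).Edge)
        ∈ (G.cycleExpand u h2 hdd ι).cutEdges S' := by
      erw [cutEdges_pair (ends_inr_inr_CE G u h2 hdd ι j2)]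
      exact Or.inr ⟨hj22, hj21⟩
    have hne12 : (Sum.inr (Sum.inr j1) : (G.cycleExpand u h2 hdd ι).Edge)
        ≠ Sum.inr (Sum.inr j2) := by
      intro h
      injection h with h
      injection h with h
      exact hj12' h
    by_cases hall : ∀ aa : {z : V // z ≠ u}, Sum.inl aa ∈ S'
    · cases y with
      | inl bb => exact absurd (hall bb) hy
      | inr jy =>
        set i0 : Fin d := ⟨jy.1, lt_of_lt_of_le jy.2 hdd⟩ with hi0
        have hmin : (⟨min i0.1 (d' - 1), by omega⟩ : Fin d') = jy := by
          apply Fin.ext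
          have := jy.2
          simp only [hi0]
          omega
        have hE3 : (Sum.inr (Sum.inl i0) : (G.cycleExpand u h2 hdd ι).Edge)
            ∈ (G.cycleExpand u h2 hdd ι).cutEdges S' := by
          erw [cutEdges_pair (ends_inr_inl_CE G u h2 hdd ι i0)]
          refine Or.inr ⟨hall _, ?_⟩
          rw [hmin]
          exact hy
        refine three_le_ncard_of_three_mem (Set.toFinite _) hE1 hE2 hE3 hne12 ?_ ?_
        · intro h; injection h with h; exact nomatch h
        · intro h; injection h with h; exact nomatch h
    · by_cases hnone : ∀ aa : {z : V // z ≠ u}, Sum.inl aa ∉ S'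
      · cases x with
        | inl aa => exact absurd hx (hnone aa)
        | inr jx =>
          set i0 : Fin d := ⟨jx.1, lt_of_lt_of_le jx.2 hdd⟩ with hi0
          have hmin : (⟨min i0.1 (d' - 1), by omega⟩ : Fin d') = jx := by
            apply Fin.ext
            have := jx.2
            simp only [hi0]
            omega
          have hE3 : (Sum.inr (Sum.inl i0) : (G.cycleExpand u h2 hdd ι).Edge)
              ∈ (G.cycleExpand u h2 hdd ι).cutEdges S' := by
            erw [cutEdges_pair (ends_inr_inl_CE G u h2 hdd ι i0)]
            refine Or.inl ⟨?_, hnone _⟩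
            rw [hmin]
            exact hx
          refine three_le_ncard_of_three_mem (Set.toFinite _) hE1 hE2 hE3 hne12 ?_ ?_
          · intro h; injection h with h; exact nomatch h
          · intro h; injection h with h; exact nomatch h
      · push_neg at hall hnone
        obtain ⟨aa, haa⟩ := hall
        obtain ⟨bb, hbb⟩ := hnone
        have hbb' : Sum.inl bb ∈ S' := hbb
        set B₀ : Set V := {v | ∃ hv : v ≠ u, Sum.inl (⟨v, hv⟩ : {z : V // z ≠ u}) ∈ S'}
          with hB₀
        have hbbB : bb.1 ∈ B₀ := ⟨bb.2, by rwa [Subtype.coe_eta]⟩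
        have haaB : aa.1 ∉ B₀ := by
          rintro ⟨hv, hmem⟩
          rw [Subtype.coe_eta] at hmem
          exact haa hmem
        obtain ⟨p, hp⟩ := hbi.2 u bb.1 (by simp [bb.2]) aa.1 (by simp [aa.2])
        obtain ⟨f, hfp, hfcut⟩ := exists_cut_edge_of_walk p hbbB haaB
        have hfu : u ∉ G.ends f := by
          intro hu
          have hmem := Walk.mem_support_of_mem_edges p hfp hu
          have := hp u hmem
          simp at this
        obtain ⟨x', y', hx', hy', hxy', hends⟩ := ends_inl_CE G u h2 hdd ι ⟨f, hfu⟩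
        rw [cutEdges_pair hxy'] at hfcut
        have hE3 : (Sum.inl ⟨f, hfu⟩ : (G.cycleExpand u h2 hdd ι).Edge)
            ∈ (G.cycleExpand u h2 hdd ι).cutEdges S' := by
          erw [cutEdges_pair hends]
          rcases hfcut with ⟨h1, hh2⟩ | ⟨h1, hh2⟩
          · obtain ⟨hv, hmem⟩ := h1
            refine Or.inl ⟨hmem, fun hmem2 => hh2 ⟨hy', hmem2⟩⟩
          · obtain ⟨hv, hmem⟩ := h1
            refine Or.inr ⟨hmem, fun hmem2 => hh2 ⟨hx', hmem2⟩⟩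
        refine three_le_ncard_of_three_mem (Set.toFinite _) hE1 hE2 hE3 hne12 ?_ ?_
        · intro h; exact nomatch h
        · intro h; exact nomatch h
  · have hone : (∀ j : Fin d', Sum.inr j ∈ S') ∨ (∀ j : Fin d', Sum.inr j ∉ S') := by
      by_cases hin : ∃ j : Fin d', Sum.inr j ∈ S'
      · left
        intro j
        by_contra hj
        exact hsplit ⟨hin, ⟨j, hj⟩⟩
      · right
        intro j hj
        exact hin ⟨j, hj⟩
    set B : Set V := {v | (v = u ∧ ∀ j : Fin d', Sum.inr j ∈ S')
      ∨ ∃ hv : v ≠ u, Sum.inl (⟨v, hv⟩ : {z : V // z ≠ u}) ∈ S'} with hB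
    have hpre : S' = piCE u ⁻¹' B := by
      ext w
      cases w with
      | inl a =>
        constructor
        · intro hmem
          show ((a : V) = u ∧ ∀ j : Fin d', Sum.inr j ∈ S')
            ∨ ∃ hv : (a : V) ≠ u, Sum.inl (⟨(a : V), hv⟩ : {z : V // z ≠ u}) ∈ S'
          exact Or.inr ⟨a.2, by rwa [Subtype.coe_eta]⟩
        · intro hmem
          rcases hmem with ⟨hau, -⟩ | ⟨hv, hmem⟩
          · exact absurd hau a.2
          · have hsa : (⟨piCE u (Sum.inl a), hv⟩ : {z : V // z ≠ u}) = a := Subtype.ext rfl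
            rwa [hsa] at hmem
      | inr j =>
        constructor
        · intro hmem
          show (u = u ∧ ∀ j : Fin d', Sum.inr j ∈ S')
            ∨ ∃ hv : u ≠ u, Sum.inl (⟨u, hv⟩ : {z : V // z ≠ u}) ∈ S'
          refine Or.inl ⟨rfl, ?_⟩
          rcases hone with h | h
          · exact h
          · exact absurd hmem (h j)
        · intro hmem
          rcases hmem with ⟨-, hallin⟩ | ⟨hv, -⟩
          · exact hallin j
          · exact absurd rfl hv
    have hπne : piCE u x ≠ piCE u y := by
      cases x with
      | inl aa =>
        cases y with
        | inl bb =>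
          intro h
          exact hxy (congrArg Sum.inl (Subtype.ext h))
        | inr jy => exact aa.2
      | inr jx =>
        cases y with
        | inl bb => exact fun h => bb.2 h.symm
        | inr jy =>
          exfalso
          rcases hone with h | h
          · exact hy (h jy)
          · exact h jx hx
    have hπx : piCE u x ∈ B := by
      rw [hpre] at hx
      exact hx
    have hπy : piCE u y ∉ B := by
      rw [hpre] at hy
      exact hy
    calc 3 ≤ (G.cutEdges B).ncard := menger_easy (hG.2 _ _ hπne).1 hπx hπy
      _ ≤ ((G.cycleExpand u h2 hdd ι).cutEdges (piCE u ⁻¹' B)).ncard :=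
          cut_le_of_preimage G u h2 hdd ι B
      _ = _ := by rw [← hpre]

end CycleExpand


theorem cycleExpand_exactlyEdgeConnected' {V : Type} (G : Multigraph V)
    (hG : G.ExactlyEdgeConnected 3) (hbi : G.Biconnected) (u : V) {d d' : ℕ}
    (h2 : 2 ≤ d') (hdd : d' ≤ d) (ι : Fin d ≃ {e : G.Edge // u ∈ G.ends e}) :
    (G.cycleExpand u h2 hdd ι).ExactlyEdgeConnected 3 := by
  classical
  constructor
  · refine ⟨Sum.inr ⟨0, by omega⟩, Sum.inr ⟨1, by omega⟩, ?_⟩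
    intro h
    injection h with h
    rw [Fin.ext_iff] at h
    simp at h
  intro x y hxy
  constructor
  · exact menger_hard 3 (fun S' hxS hyS => cut_ge_three G u h2 hdd ι hG hbi hxy S' hxS hyS)
  · intro h4
    by_cases hπ : piCE u x = piCE u y
    · cases x with
      | inl aa =>
        cases y with
        | inl bb => exact hxy (congrArg Sum.inl (Subtype.ext hπ))
        | inr jy => exact aa.2 hπ
      | inr jx =>
        cases y with
        | inl bb => exact bb.2 hπ.symm
        | inr jy =>
          have hjj : jx ≠ jy := fun h => hxy (congrArg _ h)
          by_cases hi : jx.1 < d' - 1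
          · have hmem1 : (Sum.inr jx : {x : V // x ≠ u} ⊕ Fin d') ∈
                ({Sum.inr jx} : Set ({x : V // x ≠ u} ⊕ Fin d')) := rfl
            have hmem2 : (Sum.inr jy : {x : V // x ≠ u} ⊕ Fin d') ∉
                ({Sum.inr jx} : Set ({x : V // x ≠ u} ⊕ Fin d')) := by
              intro h
              have h' : (Sum.inr jy : {x : V // x ≠ u} ⊕ Fin d') = Sum.inr jx := h
              injection h' with h'
              exact hjj h'.symm
            have h1 := menger_easy h4 hmem1 hmem2
            have h2' := cut_at_cycle_vertex G u h2 hdd ι jx hi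
            omega
          · have hj : jy.1 < d' - 1 := by
              have ha1 := jx.2
              have ha2 := jy.2
              have ha3 : jx.1 ≠ jy.1 := fun h => hjj (Fin.ext h)
              omega
            have hmem1 : (Sum.inr jx : {x : V // x ≠ u} ⊕ Fin d') ∈
                ({Sum.inr jy}ᶜ : Set ({x : V // x ≠ u} ⊕ Fin d')) := by
              intro h
              have h' : (Sum.inr jx : {x : V // x ≠ u} ⊕ Fin d') = Sum.inr jy := h
              injection h' with h'
              exact hjj h'
            have hmem2 : (Sum.inr jy : {x : V // x ≠ u} ⊕ Fin d') ∉
                ({Sum.inr jy}ᶜ : Set ({x : V // x ≠ u} ⊕ Fin d')) :=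
              not_not_intro rfl
            have h1 := menger_easy h4 hmem1 hmem2
            rw [cutEdges_compl] at h1
            have h2' := cut_at_cycle_vertex G u h2 hdd ι jy hj
            omega
    · exact (hG.2 _ _ hπ).2 (hasEDP_of_expand G u h2 hdd ι h4)



/-- **Cycle expansion preserves exact 3-edge-connectivity.**  Let `G` be an
exactly 3-edge-connected, 2-vertex-connected multigraph, `u` a vertex of
degree `d` whose incident edges (leading to the neighbors `v₁, …, v_d`, with
multiplicity) are enumerated by `ι`, and let `2 ≤ d' ≤ d`.  Then the graph
`G'` obtained by replacing `u` with a cycle on `d'` new vertices — joining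
`u_i` to `v_i` for `i ≤ d' - 1` and `u_{d'}` to `v_i` for `i ≥ d'` — is
exactly 3-edge-connected. -/
theorem cycleExpand_exactlyEdgeConnected {V : Type} (G : Multigraph V)
    (hG : G.ExactlyEdgeConnected 3) (hbi : G.Biconnected) (u : V) {d d' : ℕ}
    (h2 : 2 ≤ d') (hdd : d' ≤ d) (ι : Fin d ≃ {e : G.Edge // u ∈ G.ends e}) :
    (G.cycleExpand u h2 hdd ι).ExactlyEdgeConnected 3 :=
  cycleExpand_exactlyEdgeConnected' G hG hbi u h2 hdd ι

end Multigraph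
end
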